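/- arXiv:2404.13230 — 9 statements merged into one kernel-verified Lean document; each statement's English description precedes it below -/
import Mathlib

section
/- Let A_1, ..., A_m and B_1, ..., B_m be linear subspaces of F^n over a field F. Then dim(⋂_{i=1}^m (A_i + B_i)) ≤ dim(⋂_{i=1}^m A_i) + ∑_{i=1}^m dim(B_i). -/
open Module Submodule

lemma key_inf_sup_le {F : Type*} [Field F] {n : ℕ} (C A B : Submodule F (Fin n → F)) :
    finrank F ↥(C ⊓ (A ⊔ B)) ≤ finrank F ↥(C ⊓ A) + finrank F ↥B := by
  have h1 := Submodule.finrank_sup_add_finrank_inf_eq (C ⊓ (A ⊔ B)) A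
  have h2 : (C ⊓ (A ⊔ B)) ⊓ A = C ⊓ A := by
    rw [inf_assoc, inf_eq_right.mpr (le_sup_left : A ≤ A ⊔ B)]
  have h3 : finrank F ↥((C ⊓ (A ⊔ B)) ⊔ A) ≤ finrank F ↥(A ⊔ B) :=
    Submodule.finrank_mono (sup_le inf_le_right le_sup_left)
  have h4 := Submodule.finrank_add_le_finrank_add_finrank A B
  rw [h2] at h1
  omega

lemma fin_iInf_succ {α : Type*} [CompleteLattice α] {m : ℕ} (f : Fin (m + 1) → α) :
    (⨅ i, f i) = f 0 ⊓ ⨅ i : Fin m, f i.succ := by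
  apply le_antisymm
  · exact le_inf (iInf_le _ 0) (le_iInf fun i => iInf_le _ i.succ)
  · refine le_iInf fun i => Fin.cases inf_le_left
      (fun j => le_trans inf_le_right (iInf_le _ j)) i

lemma finrank_inf_iInf_sup_le {F : Type*} [Field F] {n : ℕ} : ∀ (m : ℕ)
    (C : Submodule F (Fin n → F)) (A B : Fin m → Submodule F (Fin n → F)),
    finrank F ↥(C ⊓ ⨅ i, (A i ⊔ B i)) ≤
      finrank F ↥(C ⊓ ⨅ i, A i) + ∑ i, finrank F ↥(B i) := by
  intro m
  induction m with
  | zero =>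
    intro C A B
    rw [iInf_of_isEmpty, iInf_of_isEmpty]
    simp
  | succ m ih =>
    intro C A B
    have e1 : (⨅ i, (A i ⊔ B i)) = (A 0 ⊔ B 0) ⊓ ⨅ i : Fin m, (A i.succ ⊔ B i.succ) :=
      fin_iInf_succ _
    have e2 : (⨅ i, A i) = A 0 ⊓ ⨅ i : Fin m, A i.succ := fin_iInf_succ _
    have step1 : finrank F ↥(C ⊓ ⨅ i, (A i ⊔ B i)) ≤
        finrank F ↥((C ⊓ (A 0 ⊔ B 0)) ⊓ ⨅ i : Fin m, A i.succ)
          + ∑ i : Fin m, finrank F ↥(B i.succ) := by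
      have := ih (C ⊓ (A 0 ⊔ B 0)) (fun i => A i.succ) (fun i => B i.succ)
      rw [e1, ← inf_assoc] at *
      exact this
    have step2 : finrank F ↥((C ⊓ (A 0 ⊔ B 0)) ⊓ ⨅ i : Fin m, A i.succ) ≤
        finrank F ↥(C ⊓ ⨅ i, A i) + finrank F ↥(B 0) := by
      have h := key_inf_sup_le (C ⊓ ⨅ i : Fin m, A i.succ) (A 0) (B 0)
      have e3 : (C ⊓ (A 0 ⊔ B 0)) ⊓ ⨅ i : Fin m, A i.succ
          = (C ⊓ ⨅ i : Fin m, A i.succ) ⊓ (A 0 ⊔ B 0) := by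
        rw [inf_assoc, inf_comm (A 0 ⊔ B 0), ← inf_assoc]
      have e4 : (C ⊓ ⨅ i : Fin m, A i.succ) ⊓ A 0 = C ⊓ ⨅ i, A i := by
        rw [e2, inf_assoc, inf_comm (⨅ i : Fin m, A i.succ)]
      rw [e3, ← e4]
      exact h
    calc finrank F ↥(C ⊓ ⨅ i, (A i ⊔ B i))
        ≤ finrank F ↥((C ⊓ (A 0 ⊔ B 0)) ⊓ ⨅ i : Fin m, A i.succ)
          + ∑ i : Fin m, finrank F ↥(B i.succ) := step1
      _ ≤ (finrank F ↥(C ⊓ ⨅ i, A i) + finrank F ↥(B 0))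
          + ∑ i : Fin m, finrank F ↥(B i.succ) := by gcongr
      _ = finrank F ↥(C ⊓ ⨅ i, A i) + ∑ i, finrank F ↥(B i) := by
          rw [Fin.sum_univ_succ]; ring

/-- For subspaces `A_1, …, A_m` and `B_1, …, B_m` of `F^n`,
`dim (⋂ᵢ (Aᵢ + Bᵢ)) ≤ dim (⋂ᵢ Aᵢ) + ∑ᵢ dim Bᵢ`. -/
theorem finrank_iInf_sup_le {F : Type*} [Field F] {n m : ℕ}
    (A B : Fin m → Submodule F (Fin n → F)) :
    Module.finrank F ↥(⨅ i, (A i ⊔ B i)) ≤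
      Module.finrank F ↥(⨅ i, A i) + ∑ i, Module.finrank F ↥(B i) := by
  have := finrank_inf_iInf_sup_le m ⊤ A B
  rwa [top_inf_eq, top_inf_eq] at this
end

section
/- Let C ⊆ F^n be a k-dimensional linear code over an extension field F of F_q with generator matrix G ∈ F^{k×n}. Then the following are equivalent: (1) C is MRD, i.e., every nonzero codeword v satisfies rank_{F_q}(v) ≥ n - k + 1; (2) for every full-rank matrix A ∈ F_q^{n×k}, the matrix GA ∈ F^{k×k} is invertible; (3) for every k' ≤ k and every full-rank A' ∈ F_q^{n×k'}, the matrix GA' ∈ F^{k×k'} has rank k'. -/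
open Matrix Module Submodule

section Aux

variable {Fq F : Type*} [Field Fq] [Field F] [Algebra Fq F] {k n : ℕ}

lemma aux_rank_nullity (v : Fin n → F) :
    finrank Fq ↥(span Fq (Set.range v)) +
      finrank Fq ↥(LinearMap.ker (Fintype.linearCombination Fq v)) = n := by
  have := LinearMap.finrank_range_add_finrank_ker (Fintype.linearCombination Fq v)
  rw [Fintype.range_linearCombination] at this
  simpa using this

lemma aux_phi_col (v : Fin n → F) (a : Fin n → Fq) :
    Fintype.linearCombination Fq v a = v ⬝ᵥ (fun i => algebraMap Fq F (a i)) := by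
  simp [Fintype.linearCombination_apply, dotProduct, Algebra.smul_def, mul_comm]

lemma aux_li_of_rank {R : Type*} [Field R] {m : Type*} [Fintype m] {k' : ℕ}
    {A : Matrix m (Fin k') R} (h : A.rank = k') :
    LinearIndependent R (fun j => Aᵀ j) := by
  rw [linearIndependent_iff_card_eq_finrank_span, Set.finrank, Fintype.card_fin]
  exact h.symm.trans (Matrix.rank_eq_finrank_span_cols A)

lemma aux_rank_of_li {R : Type*} [Field R] {m : Type*} [Fintype m] {k' : ℕ}
    {A : Matrix m (Fin k') R} (h : LinearIndependent R (fun j => Aᵀ j)) : A.rank = k' := by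
  rw [Matrix.rank_eq_finrank_span_cols]; exact (finrank_span_eq_card h).trans (Fintype.card_fin _)

lemma aux_extend {k' : ℕ} (c : Fin k' → (Fin n → Fq)) (hc : LinearIndependent Fq c) :
    ∀ j (hj : k' ≤ j), j ≤ n → ∃ b : Fin j → (Fin n → Fq),
      LinearIndependent Fq b ∧ ∀ i : Fin k', b (Fin.castLE hj i) = c i := by
  intro j hj
  induction j, hj using Nat.le_induction with
  | base => exact fun _ => ⟨c, hc, fun i => by simp⟩
  | succ j hj ih =>
    intro hjn
    obtain ⟨b, hb, hbe⟩ := ih (Nat.le_of_succ_le hjn)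
    have hlt : j < finrank Fq (Fin n → Fq) := by
      rw [Module.finrank_fin_fun]; omega
    obtain ⟨x, hx⟩ := exists_linearIndependent_snoc_of_lt_finrank hb hlt
    refine ⟨Fin.snoc b x, hx, fun i => ?_⟩
    have h1 : (Fin.castLE (Nat.le_succ_of_le hj) i) = Fin.castSucc (Fin.castLE hj i) := rfl
    rw [h1, Fin.snoc_castSucc, hbe]

lemma aux_exists_li (W : Submodule Fq (Fin n → Fq)) (h : k ≤ finrank Fq W) :
    ∃ b : Fin k → (Fin n → Fq), LinearIndependent Fq b ∧ ∀ i, b i ∈ W := by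
  let B := Module.finBasis Fq W
  refine ⟨fun i => (B (Fin.castLE h i) : (Fin n → Fq)), ?_, fun i => (B _).2⟩
  have h1 : LinearIndependent Fq (fun i : Fin k => B (Fin.castLE h i)) :=
    B.linearIndependent.comp _ (Fin.castLE_injective h)
  exact h1.map' W.subtype W.ker_subtype

end Aux

/-- Let `C ⊆ F^n` be the `k`-dimensional linear code over an extension field `F` of `F_q`
with generator matrix `G ∈ F^{k×n}` (whose rows are linearly independent), i.e. `C` is the
row space of `G`.  Then the following are equivalent:
1. `C` is MRD: every nonzero codeword `v` satisfies `rank_{F_q}(v) ≥ n - k + 1`;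
2. for every full-rank `A ∈ F_q^{n×k}`, the matrix `G * A ∈ F^{k×k}` is invertible;
3. for every `k' ≤ k` and every full-rank `A' ∈ F_q^{n×k'}`, `G * A'` has rank `k'`. -/
theorem mrd_tfae {Fq F : Type*} [Field Fq] [Field F] [Algebra Fq F] {k n : ℕ}
    (G : Matrix (Fin k) (Fin n) F) (hG : LinearIndependent F (fun i => G i)) :
    [ (∀ v ∈ LinearMap.range G.vecMulLinear, v ≠ 0 →
        n - k + 1 ≤ Module.finrank Fq ↥(Submodule.span Fq (Set.range v))),
      (∀ A : Matrix (Fin n) (Fin k) Fq, A.rank = k →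
        (G * A.map (algebraMap Fq F)).det ≠ 0),
      (∀ k' : ℕ, k' ≤ k → ∀ A' : Matrix (Fin n) (Fin k') Fq, A'.rank = k' →
        (G * A'.map (algebraMap Fq F)).rank = k') ].TFAE := by
  classical
  have hkn : k ≤ n := by
    simpa [Module.finrank_fin_fun] using hG.fintype_card_le_finrank
  tfae_have 1 → 2 := by
    intro h1 A hA
    rcases Nat.eq_zero_or_pos k with hk0 | hk0
    · subst hk0
      simp [Matrix.det_isEmpty]
    intro hdet
    obtain ⟨x, hx0, hxA⟩ := Matrix.exists_vecMul_eq_zero_iff.mpr hdet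
    set v : Fin n → F := x ᵥ* G with hv
    have hvne : v ≠ 0 := by
      intro h
      apply hx0
      apply Matrix.vecMul_injective_iff.mpr hG
      show x ᵥ* G = 0 ᵥ* G
      rw [Matrix.zero_vecMul]
      exact h
    have hvmem : v ∈ LinearMap.range G.vecMulLinear := ⟨x, by simp [hv]⟩
    have hr := h1 v hvmem hvne
    have hcols : LinearIndependent Fq (fun j => Aᵀ j) := aux_li_of_rank hA
    have hvA : v ᵥ* (A.map (algebraMap Fq F)) = 0 := by
      rw [hv, Matrix.vecMul_vecMul]; exact hxA
    have hker : ∀ j, Aᵀ j ∈ LinearMap.ker (Fintype.linearCombination Fq v) := by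
      intro j
      rw [LinearMap.mem_ker, aux_phi_col]
      have := congr_fun hvA j
      simpa [Matrix.vecMul, dotProduct, Matrix.map_apply] using this
    have hd : k ≤ finrank Fq ↥(LinearMap.ker (Fintype.linearCombination Fq v)) := by
      have hli : LinearIndependent Fq
          (fun j : Fin k => (⟨Aᵀ j, hker j⟩ : LinearMap.ker (Fintype.linearCombination Fq v))) :=
        hcols.of_comp (LinearMap.ker (Fintype.linearCombination Fq v)).subtype
      simpa using hli.fintype_card_le_finrank
    have hrn := aux_rank_nullity (Fq := Fq) v
    omega
  tfae_have 2 → 1 := by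
    intro h2 v hvmem hvne
    obtain ⟨x, hx⟩ := hvmem
    by_contra hcon
    push_neg at hcon
    have hrn := aux_rank_nullity (Fq := Fq) v
    have hd : k ≤ finrank Fq ↥(LinearMap.ker (Fintype.linearCombination Fq v)) := by omega
    obtain ⟨b, hb, hbW⟩ := aux_exists_li _ hd
    set A : Matrix (Fin n) (Fin k) Fq := Matrix.of fun i j => b j i with hAdef
    have hA : A.rank = k := aux_rank_of_li (k' := k) (A := A) hb
    have hU : IsUnit (G * A.map (algebraMap Fq F)) := by
      rw [Matrix.isUnit_iff_isUnit_det, isUnit_iff_ne_zero]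
      exact h2 A hA
    have hinj := Matrix.vecMul_injective_iff_isUnit.mpr hU
    have hx0 : x ≠ 0 := by
      intro h
      exact hvne (by rw [← hx, h, map_zero])
    apply hx0
    have hz : x ᵥ* (G * A.map (algebraMap Fq F)) = 0 := by
      rw [← Matrix.vecMul_vecMul]
      have hxv : x ᵥ* G = v := by rw [← hx]; simp
      rw [hxv]
      ext j
      have hm := hbW j
      rw [LinearMap.mem_ker, aux_phi_col] at hm
      simpa [Matrix.vecMul, dotProduct, Matrix.map_apply, hAdef] using hm
    have h0 : (0 : Fin k → F) ᵥ* (G * A.map (algebraMap Fq F)) = 0 := Matrix.zero_vecMul _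
    exact hinj (hz.trans h0.symm)
  tfae_have 2 → 3 := by
    intro h2 k' hk' A' hA'
    have hc : LinearIndependent Fq (fun j => A'ᵀ j) := aux_li_of_rank hA'
    obtain ⟨b, hb, hbe⟩ := aux_extend _ hc k hk' hkn
    set A : Matrix (Fin n) (Fin k) Fq := Matrix.of fun i j => b j i with hAdef
    have hA : A.rank = k := aux_rank_of_li (k' := k) (A := A) hb
    have hU : IsUnit (G * A.map (algebraMap Fq F)) := by
      rw [Matrix.isUnit_iff_isUnit_det, isUnit_iff_ne_zero]
      exact h2 A hA
    have hcolsF : LinearIndependent F (fun j => (G * A.map (algebraMap Fq F))ᵀ j) :=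
      Matrix.linearIndependent_cols_iff_isUnit.mpr hU
    have hsub : G * A'.map (algebraMap Fq F) =
        (G * A.map (algebraMap Fq F)).submatrix id (Fin.castLE hk') := by
      ext i j
      simp only [Matrix.mul_apply, Matrix.submatrix_apply, Matrix.map_apply, id_eq, hAdef,
        Matrix.of_apply, hbe j]
      rfl
    rw [hsub]
    exact aux_rank_of_li (hcolsF.comp _ (Fin.castLE_injective hk'))
  tfae_have 3 → 2 := by
    intro h3 A hA
    have hr := h3 k le_rfl A hA
    have hcolsF := aux_li_of_rank hr
    have hU := Matrix.linearIndependent_cols_iff_isUnit.mp hcolsF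
    rw [Matrix.isUnit_iff_isUnit_det, isUnit_iff_ne_zero] at hU
    exact hU
  tfae_finish
end

section
/- Let C be an [n,k] linear code over an extension field F of F_q. If C is MRD (every nonzero codeword has F_q-rank at least n-k+1), then the dual code C^⊥ is also MRD (every nonzero codeword of C^⊥ has F_q-rank at least k+1). -/
/-- The linear functional `w ↦ ∑ i, w i * u i` given by dotting with a fixed vector `u`. -/
noncomputable def dotFunctional {F : Type*} [Field F] {n : ℕ} (u : Fin n → F) :
    (Fin n → F) →ₗ[F] F :=
  ∑ i, u i • (LinearMap.proj i : (Fin n → F) →ₗ[F] F)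

/-- The dual code `C^⊥ = {u ∈ F^n : ∑ i, u i * v i = 0 for all v ∈ C}`. -/
noncomputable def dualCode {F : Type*} [Field F] {n : ℕ} (C : Submodule F (Fin n → F)) :
    Submodule F (Fin n → F) :=
  ⨅ v ∈ C, LinearMap.ker (dotFunctional v)

lemma dotFunctional_apply' {F : Type*} [Field F] {n : ℕ} (u w : Fin n → F) :
    dotFunctional u w = ∑ i, u i * w i := by
  simp [dotFunctional]

set_option maxHeartbeats 1000000 in
/-- If an `[n,k]` linear code `C` over an extension field `F` of `F_q` is MRD
(every nonzero codeword has `F_q`-rank at least `n - k + 1`), then its dual code `C^⊥`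
is also MRD (every nonzero codeword of `C^⊥` has `F_q`-rank at least `k + 1`). -/
theorem dual_of_mrd_is_mrd {Fq F : Type*} [Field Fq] [Field F] [Algebra Fq F] {n k : ℕ}
    (C : Submodule F (Fin n → F)) (hC : Module.finrank F ↥C = k)
    (hMRD : ∀ v ∈ C, v ≠ 0 →
      n - k + 1 ≤ Module.finrank Fq ↥(Submodule.span Fq (Set.range v))) :
    ∀ u ∈ dualCode C, u ≠ 0 →
      k + 1 ≤ Module.finrank Fq ↥(Submodule.span Fq (Set.range u)) := by
  classical
  intro u hu hune
  by_contra hcon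
  push_neg at hcon
  set φ := algebraMap Fq F with hφ
  set W := Submodule.span Fq (Set.range u) with hW
  haveI : FiniteDimensional Fq W := FiniteDimensional.span_of_finite Fq (Set.finite_range u)
  set r := Module.finrank Fq W with hr
  have hkn : k ≤ n := by
    have := Submodule.finrank_le C
    simpa [hC, Module.finrank_pi] using this
  have hrk : r ≤ k := by omega
  let b : Module.Basis (Fin r) Fq W := Module.finBasis Fq W
  have hmemW : ∀ i, u i ∈ W := fun i => Submodule.subset_span (Set.mem_range_self i)
  let c : Fin n → Fin r → Fq := fun i => b.equivFun ⟨u i, hmemW i⟩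
  have huc : ∀ i, (⟨u i, hmemW i⟩ : W) = ∑ j, c i j • b j := fun i =>
    (b.equivFun.symm_apply_apply ⟨u i, hmemW i⟩).symm.trans (b.equivFun_symm_apply (c i))
  have hu_exp : ∀ i, u i = ∑ j, φ (c i j) * (b j : F) := by
    intro i
    have := congrArg (Subtype.val) (huc i)
    simpa [Algebra.smul_def] using this
  -- the matrix of coefficients over Fq
  let Mc : Matrix (Fin r) (Fin n) Fq := Matrix.of fun j i => c i j
  let ψ : (Fin n → F) →ₗ[F] (Fin r → F) := Matrix.toLin' (Mc.map φ)
  have hψ_apply : ∀ v j, ψ v j = ∑ i, φ (c i j) * v i := by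
    intro v j
    simp [ψ, Matrix.toLin'_apply, Matrix.mulVec, dotProduct, Mc]
  let T : (Fin n → Fq) →ₗ[Fq] (Fin r → Fq) := Matrix.toLin' Mc
  have hT_apply : ∀ x j, T x j = ∑ i, c i j * x i := by
    intro x j
    simp [T, Matrix.toLin'_apply, Matrix.mulVec, dotProduct, Mc]
  -- surjectivity of T
  have hTsurj : Function.Surjective T := by
    intro y
    obtain ⟨x, hx⟩ := Submodule.mem_span_range_iff_exists_fun Fq |>.1 (b.equivFun.symm y).2
    refine ⟨x, ?_⟩
    have hsum : (b.equivFun.symm y : W) = ∑ i, x i • (⟨u i, hmemW i⟩ : W) := by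
      apply Subtype.ext
      simpa using hx.symm
    have : y = ∑ i, x i • c i := by
      have h2 := congrArg b.equivFun hsum
      rw [LinearEquiv.apply_symm_apply, map_sum] at h2
      simp_rw [map_smul] at h2
      exact h2
    funext j
    rw [hT_apply, this]
    simp [Finset.sum_apply, mul_comm]
  -- membership facts for the dual
  have hCle : C ≤ LinearMap.ker (dotFunctional u) := by
    intro v hv
    have h1 : u ∈ LinearMap.ker (dotFunctional v) := by
      simp only [dualCode, Submodule.mem_iInf] at hu
      exact hu v hv
    have h2 : (∑ i, v i * u i) = 0 := by
      rw [← dotFunctional_apply']; exact h1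
    rw [LinearMap.mem_ker, dotFunctional_apply', ← h2]
    exact Finset.sum_congr rfl fun i _ => mul_comm _ _
  have hkerψle : LinearMap.ker ψ ≤ LinearMap.ker (dotFunctional u) := by
    intro v hv
    rw [LinearMap.mem_ker] at hv ⊢
    rw [dotFunctional_apply']
    calc ∑ i, u i * v i = ∑ i, ∑ j, (b j : F) * (φ (c i j) * v i) := by
          refine Finset.sum_congr rfl fun i _ => ?_
          rw [hu_exp i, Finset.sum_mul]
          exact Finset.sum_congr rfl fun j _ => by ring
      _ = ∑ j, (b j : F) * ψ v j := by
          rw [Finset.sum_comm]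
          refine Finset.sum_congr rfl fun j _ => ?_
          rw [hψ_apply, Finset.mul_sum]
      _ = 0 := by rw [hv]; simp
  have hne_top : LinearMap.ker (dotFunctional u) ≠ ⊤ := by
    obtain ⟨i0, hi0⟩ := Function.ne_iff.1 hune
    intro htop
    have hmem : Pi.single i0 1 ∈ LinearMap.ker (dotFunctional u) := htop ▸ Submodule.mem_top
    rw [LinearMap.mem_ker, dotFunctional_apply'] at hmem
    simp [Pi.single_apply, mul_ite, Finset.sum_ite_eq'] at hmem
    exact hi0 (by simpa using hmem)
  -- surjectivity of ψ
  have hψsurj : LinearMap.range ψ = ⊤ := by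
    rw [← top_le_iff, ← (Pi.basisFun F (Fin r)).span_eq, Submodule.span_le]
    rintro _ ⟨j0, rfl⟩
    rw [SetLike.mem_coe, LinearMap.mem_range]
    obtain ⟨x, hx⟩ := hTsurj (Pi.single j0 1)
    refine ⟨fun i => φ (x i), ?_⟩
    funext j
    rw [hψ_apply]
    have hφsum : ∑ i, φ (c i j) * φ (x i) = φ (T x j) := by
      rw [hT_apply, map_sum]
      exact Finset.sum_congr rfl fun i _ => (map_mul φ _ _).symm
    rw [hφsum, hx]
    simp [Pi.basisFun_apply, Pi.single_apply, apply_ite φ]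
  -- kernel dimension of T over Fq
  have hrankT := LinearMap.finrank_range_add_finrank_ker T
  rw [LinearMap.range_eq_top.2 hTsurj, finrank_top] at hrankT
  simp only [Module.finrank_pi, Fintype.card_fin] at hrankT
  have hrn : r ≤ n := by omega
  set m := n - r with hm
  have hkerT : Module.finrank Fq ↥(LinearMap.ker T) = m := by omega
  -- kernel dimension of ψ over F
  have hkerψ : Module.finrank F ↥(LinearMap.ker ψ) = m := by
    have h := LinearMap.finrank_range_add_finrank_ker ψ
    rw [hψsurj, finrank_top] at h
    simp only [Module.finrank_pi, Fintype.card_fin] at h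
    omega
  -- a basis of ker T over Fq
  haveI : FiniteDimensional Fq ↥(LinearMap.ker T) := inferInstance
  let a : Module.Basis (Fin m) Fq ↥(LinearMap.ker T) := Module.finBasisOfFinrankEq Fq _ hkerT
  let avec : Fin m → (Fin n → Fq) := fun j => ((a j : Fin n → Fq))
  have hTa : ∀ j, T (avec j) = 0 := fun j => (a j).2
  let Ma : Matrix (Fin n) (Fin m) Fq := Matrix.of fun i j => avec j i
  let Abar : (Fin m → F) →ₗ[F] (Fin n → F) := Matrix.toLin' (Ma.map φ)
  have hAbar_apply : ∀ w i, Abar w i = ∑ j, φ (avec j i) * w j := by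
    intro w i; simp [Abar, Matrix.toLin'_apply, Matrix.mulVec, dotProduct, Ma]
  have hMcMa : Mc * Ma = 0 := by
    ext j j'
    have h := congrFun (hTa j') j
    rw [hT_apply] at h
    simpa [Matrix.mul_apply, Mc, Ma] using h
  have h0F : (Mc.map φ) * (Ma.map φ) = 0 := by
    rw [← Matrix.map_mul, hMcMa]
    ext i j; simp
  have hcomp : ∀ w, ψ (Abar w) = 0 := by
    intro w
    have h : ψ (Abar w) = Matrix.toLin' ((Mc.map φ) * (Ma.map φ)) w := by
      rw [Matrix.toLin'_mul]; rfl
    rw [h, h0F]; simp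
  -- injectivity of Abar
  let S : (Fin m → Fq) →ₗ[Fq] (Fin n → Fq) := Matrix.toLin' Ma
  have hSinj : LinearMap.ker S = ⊥ := by
    rw [LinearMap.ker_eq_bot']
    intro x hx
    have hli : LinearIndependent Fq avec :=
      a.linearIndependent.map' (Submodule.subtype _) (Submodule.ker_subtype _)
    have hSx : ∀ i, S x i = ∑ j, x j * avec j i := by
      intro i; simp [S, Matrix.toLin'_apply, Matrix.mulVec, dotProduct, Ma, mul_comm]
    have hsum : ∑ j, x j • avec j = 0 := by
      funext i
      rw [Finset.sum_apply]
      simp only [Pi.smul_apply, smul_eq_mul]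
      rw [← hSx, hx]
    exact funext (Fintype.linearIndependent_iff.1 hli x hsum)
  obtain ⟨ℓ, hℓ⟩ := LinearMap.exists_leftInverse_of_injective S hSinj
  have hLA : (LinearMap.toMatrix' ℓ) * Ma = 1 := by
    have h := congrArg LinearMap.toMatrix' hℓ
    rwa [LinearMap.toMatrix'_comp, LinearMap.toMatrix'_toLin', LinearMap.toMatrix'_id] at h
  have hLAF : ((LinearMap.toMatrix' ℓ).map φ) * (Ma.map φ) = 1 := by
    rw [← Matrix.map_mul, hLA, Matrix.map_one φ (map_zero φ) (map_one φ)]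
  have hAbarInj : Function.Injective Abar := by
    intro w1 w2 hww
    have hinv : ∀ w, Matrix.toLin' ((LinearMap.toMatrix' ℓ).map φ) (Abar w) = w := by
      intro w
      have h : Matrix.toLin' ((LinearMap.toMatrix' ℓ).map φ) (Abar w)
          = Matrix.toLin' (((LinearMap.toMatrix' ℓ).map φ) * (Ma.map φ)) w := by
        rw [Matrix.toLin'_mul]; rfl
      rw [h, hLAF]
      simp [Matrix.toLin'_apply]
    rw [← hinv w1, ← hinv w2, hww]
  -- range of Abar is ker ψ
  have hAbarrange : LinearMap.range Abar = LinearMap.ker ψ := by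
    apply Submodule.eq_of_le_of_finrank_le
    · rintro _ ⟨w, rfl⟩
      exact LinearMap.mem_ker.2 (hcomp w)
    · rw [hkerψ, LinearMap.finrank_range_of_inj hAbarInj]
      simp [Module.finrank_pi]
  -- dimension of D = C ⊓ ker ψ
  have hsup_le : C ⊔ LinearMap.ker ψ ≤ LinearMap.ker (dotFunctional u) := sup_le hCle hkerψle
  have hsup_rank : Module.finrank F ↥(C ⊔ LinearMap.ker ψ) < n := by
    have h1 : Module.finrank F ↥(C ⊔ LinearMap.ker ψ)
        ≤ Module.finrank F ↥(LinearMap.ker (dotFunctional u)) :=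
      Submodule.finrank_mono hsup_le
    have h2 : Module.finrank F ↥(LinearMap.ker (dotFunctional u)) < n := by
      have h3 := Submodule.finrank_lt hne_top
      simpa [Module.finrank_pi] using h3
    omega
  have hinf_eq := Submodule.finrank_sup_add_finrank_inf_eq C (LinearMap.ker ψ)
  rw [hC, hkerψ] at hinf_eq
  have hDrank : k - r + 1 ≤ Module.finrank F ↥(C ⊓ LinearMap.ker ψ) := by
    have h6 := hsup_rank
    have h7 := hinf_eq
    omega
  -- pull back to F^m
  set D' := Submodule.comap Abar (C ⊓ LinearMap.ker ψ) with hD'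
  have hmapD' : Submodule.map Abar D' = C ⊓ LinearMap.ker ψ := by
    rw [hD', Submodule.map_comap_eq, hAbarrange]
    exact inf_eq_right.2 inf_le_right
  have hD'rank : k - r + 1 ≤ Module.finrank F ↥D' := by
    have h := Submodule.finrank_map_le Abar D'
    rw [hmapD'] at h
    omega
  set d := Module.finrank F ↥D' with hd
  have hdm : d ≤ m := by
    have h := Submodule.finrank_le D'
    simpa [Module.finrank_pi] using h
  have hd1m : d - 1 ≤ m := by omega
  -- a nonzero vector of D' vanishing on the first d-1 coordinates
  let g : ↥D' →ₗ[F] (Fin (d - 1) → F) :=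
    (LinearMap.pi fun j : Fin (d - 1) => LinearMap.proj (Fin.castLE hd1m j)).comp D'.subtype
  have hgker : LinearMap.ker g ≠ ⊥ := by
    intro hbot
    have hinj : Function.Injective g := LinearMap.ker_eq_bot.1 hbot
    have h := LinearMap.finrank_le_finrank_of_injective hinj
    simp only [Module.finrank_pi, Fintype.card_fin] at h
    omega
  obtain ⟨x, hxker, hx0⟩ := (Submodule.ne_bot_iff _).1 hgker
  set w : Fin m → F := (x : Fin m → F) with hwdef
  have hw0 : w ≠ 0 := fun h => hx0 (Subtype.ext h)
  have hwD' : w ∈ D' := x.2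
  have hwz : ∀ j : Fin m, (j : ℕ) < d - 1 → w j = 0 := by
    intro j hj
    have h := congrFun (LinearMap.mem_ker.1 hxker) ⟨(j : ℕ), hj⟩
    have hcast : Fin.castLE hd1m ⟨(j : ℕ), hj⟩ = j := Fin.ext rfl
    simpa [g, hcast] using h
  set v := Abar w with hv
  have hvD : v ∈ C ⊓ LinearMap.ker ψ := hmapD' ▸ Submodule.mem_map_of_mem hwD'
  have hvC : v ∈ C := hvD.1
  have hv0 : v ≠ 0 := by
    intro h
    exact hw0 (hAbarInj (show Abar w = Abar 0 by rw [map_zero]; exact h))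
  -- rank estimates
  haveI : FiniteDimensional Fq ↥(Submodule.span Fq (Set.range w)) :=
    FiniteDimensional.span_of_finite Fq (Set.finite_range w)
  let tail : Fin (m - (d - 1)) → F := fun j => w ⟨d - 1 + (j : ℕ), by omega⟩
  haveI : FiniteDimensional Fq ↥(Submodule.span Fq (Set.range tail)) :=
    FiniteDimensional.span_of_finite Fq (Set.finite_range tail)
  have hvw : Submodule.span Fq (Set.range v) ≤ Submodule.span Fq (Set.range w) := by
    rw [Submodule.span_le]
    rintro _ ⟨i, rfl⟩
    have h : v i = ∑ j, avec j i • w j := by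
      rw [hv]
      rw [hAbar_apply]
      exact Finset.sum_congr rfl fun j _ => (Algebra.smul_def _ _).symm
    rw [SetLike.mem_coe, h]
    exact Submodule.sum_mem _ fun j _ =>
      Submodule.smul_mem _ _ (Submodule.subset_span (Set.mem_range_self j))
  have hwt : Submodule.span Fq (Set.range w) ≤ Submodule.span Fq (Set.range tail) := by
    rw [Submodule.span_le]
    rintro _ ⟨j, rfl⟩
    rw [SetLike.mem_coe]
    by_cases hj : (j : ℕ) < d - 1
    · rw [hwz j hj]; exact Submodule.zero_mem _
    · have h : w j = tail ⟨(j : ℕ) - (d - 1), by omega⟩ := by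
        show w j = w _
        congr 1
        refine Fin.ext ?_
        show (j : ℕ) = d - 1 + ((j : ℕ) - (d - 1))
        omega
      rw [h]
      exact Submodule.subset_span (Set.mem_range_self _)
  have htail_rank : Module.finrank Fq ↥(Submodule.span Fq (Set.range tail)) ≤ m - (d - 1) := by
    have h1 : Module.finrank Fq ↥(Submodule.span Fq (Set.range tail))
        ≤ (Set.range tail).toFinset.card := finrank_span_le_card _
    rw [Set.toFinset_range] at h1
    calc Module.finrank Fq ↥(Submodule.span Fq (Set.range tail))
        ≤ (Finset.univ.image tail).card := h1
      _ ≤ (Finset.univ : Finset (Fin (m - (d - 1)))).card := Finset.card_image_le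
      _ = m - (d - 1) := by simp
  have hbig := hMRD v hvC hv0
  have hmono1 : Module.finrank Fq ↥(Submodule.span Fq (Set.range v))
      ≤ Module.finrank Fq ↥(Submodule.span Fq (Set.range w)) :=
    Submodule.finrank_mono hvw
  have hmono2 : Module.finrank Fq ↥(Submodule.span Fq (Set.range w))
      ≤ Module.finrank Fq ↥(Submodule.span Fq (Set.range tail)) :=
    Submodule.finrank_mono hwt
  omega
end

section
/- Let n ≥ k ≥ 0 and let V_1, ..., V_k be subspaces of F_q^n such that dim(∑_{i∈Ω} V_i) ≥ n - k + |Ω| for every nonempty Ω ⊆ [k]. Then there exist subspaces V'_i ⊆ V_i for i = 1,...,k such that dim(∑_{i∈Ω} V'_i) ≥ n - k + |Ω| for every nonempty Ω ⊆ [k], and dim V'_i = n - k + 1 for all i ∈ [k]. -/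
open Module Submodule

lemma drop_le_one {K M : Type*} [Field K] [AddCommGroup M] [Module K M] [FiniteDimensional K M]
    (A W S : Submodule K M) (hWA : W ≤ A) (hr : finrank K W + 1 = finrank K A) :
    finrank K ↥(A ⊔ S) ≤ finrank K ↥(W ⊔ S) + 1 := by
  have e1 := Submodule.finrank_sup_add_finrank_inf_eq A S
  have e2 := Submodule.finrank_sup_add_finrank_inf_eq W S
  have i1 : finrank K ↥(W ⊓ S) ≤ finrank K ↥(A ⊓ S) :=
    Submodule.finrank_mono (inf_le_inf_right S hWA)
  omega

lemma exists_hyperplane {K M : Type*} [Field K] [AddCommGroup M] [Module K M]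
    [FiniteDimensional K M] (A : Submodule K M) (x : M) (hxA : x ∈ A) (hx : x ≠ 0) :
    ∃ W : Submodule K M, W ≤ A ∧ finrank K W + 1 = finrank K A ∧ x ∉ W ∧ W ⊔ (K ∙ x) = A := by
  set x' : ↥A := ⟨x, hxA⟩ with hx'
  have hx'0 : x' ≠ 0 := by simp [hx', Subtype.ext_iff, hx]
  obtain ⟨q, hq⟩ := Submodule.exists_isCompl (K ∙ x')
  refine ⟨q.map A.subtype, Submodule.map_subtype_le A q, ?_, ?_, ?_⟩
  · have h1 : finrank K (K ∙ x') = 1 := finrank_span_singleton hx'0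
    have h2 := Submodule.finrank_add_eq_of_isCompl hq
    have h3 := Submodule.finrank_map_subtype_eq A q
    omega
  · intro hxW
    obtain ⟨y, hyq, hyx⟩ := hxW
    have hy : y = x' := Subtype.ext hyx
    have : x' ∈ (K ∙ x') ⊓ q := ⟨Submodule.mem_span_singleton_self x', hy ▸ hyq⟩
    rw [hq.inf_eq_bot] at this
    exact hx'0 this
  · have hspan : (K ∙ x) = (K ∙ x').map A.subtype := by
      rw [Submodule.map_span, Set.image_singleton]; rfl
    rw [hspan, ← Submodule.map_sup, sup_comm, hq.sup_eq_top, Submodule.map_top,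
      Submodule.range_subtype]

lemma hall_shrink {Fq : Type*} [Field Fq] {n k : ℕ}
    (V : Fin k → Submodule Fq (Fin n → Fq))
    (h : ∀ Ω : Finset (Fin k), Ω.Nonempty →
      n - k + Ω.card ≤ Module.finrank Fq ↥(Ω.sup V))
    (i₀ : Fin k) (hbig : n - k + 2 ≤ Module.finrank Fq ↥(V i₀)) :
    ∃ W : Submodule Fq (Fin n → Fq), W ≤ V i₀ ∧
      Module.finrank Fq ↥W + 1 = Module.finrank Fq ↥(V i₀) ∧
      (∀ Ω : Finset (Fin k), Ω.Nonempty →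
        n - k + Ω.card ≤ Module.finrank Fq ↥(Ω.sup (Function.update V i₀ W))) := by
  classical
  -- sup of update
  have hsupd : ∀ (W : Submodule Fq (Fin n → Fq)) (Ω : Finset (Fin k)), i₀ ∈ Ω →
      Ω.sup (Function.update V i₀ W) = W ⊔ (Ω.erase i₀).sup V := by
    intro W Ω hi
    conv_lhs => rw [← Finset.insert_erase hi]
    rw [Finset.sup_insert, Function.update_self]
    congr 1
    exact Finset.sup_congr rfl fun i hi' =>
      Function.update_of_ne (Finset.ne_of_mem_erase hi') _ _
  have hsame : ∀ (W : Submodule Fq (Fin n → Fq)) (Ω : Finset (Fin k)), i₀ ∉ Ω →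
      Ω.sup (Function.update V i₀ W) = Ω.sup V := by
    intro W Ω hi
    exact Finset.sup_congr rfl fun i hi' =>
      Function.update_of_ne (by rintro rfl; exact hi hi') _ _
  have hVsup : ∀ (Ω : Finset (Fin k)), i₀ ∈ Ω → Ω.sup V = V i₀ ⊔ (Ω.erase i₀).sup V := by
    intro Ω hi
    conv_lhs => rw [← Finset.insert_erase hi, Finset.sup_insert]
  set Tight : Finset (Fin k) → Prop := fun Ω => i₀ ∈ Ω ∧
    Module.finrank Fq ↥(Ω.sup V) = n - k + Ω.card with hT
  by_cases htight : ∃ Ω, Tight Ω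
  · -- there is a tight set: find a minimal one
    have hinter : ∀ Ω₁ Ω₂, Tight Ω₁ → Tight Ω₂ → Tight (Ω₁ ∩ Ω₂) := by
      intro Ω₁ Ω₂ ⟨hi1, ht1⟩ ⟨hi2, ht2⟩
      have hiI : i₀ ∈ Ω₁ ∩ Ω₂ := Finset.mem_inter.2 ⟨hi1, hi2⟩
      have hU : n - k + (Ω₁ ∪ Ω₂).card ≤ Module.finrank Fq ↥((Ω₁ ∪ Ω₂).sup V) :=
        h _ ⟨i₀, Finset.mem_union_left _ hi1⟩
      have hI : n - k + (Ω₁ ∩ Ω₂).card ≤ Module.finrank Fq ↥((Ω₁ ∩ Ω₂).sup V) :=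
        h _ ⟨i₀, hiI⟩
      have hUeq : (Ω₁ ∪ Ω₂).sup V = Ω₁.sup V ⊔ Ω₂.sup V := Finset.sup_union
      have hIle : (Ω₁ ∩ Ω₂).sup V ≤ Ω₁.sup V ⊓ Ω₂.sup V :=
        le_inf (Finset.sup_mono Finset.inter_subset_left)
          (Finset.sup_mono Finset.inter_subset_right)
      have e := Submodule.finrank_sup_add_finrank_inf_eq (Ω₁.sup V) (Ω₂.sup V)
      have i2 : Module.finrank Fq ↥((Ω₁ ∩ Ω₂).sup V) ≤
          Module.finrank Fq ↥(Ω₁.sup V ⊓ Ω₂.sup V) := Submodule.finrank_mono hIle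
      have hc := Finset.card_inter_add_card_union Ω₁ Ω₂
      rw [hUeq] at hU
      exact ⟨hiI, by omega⟩
    obtain ⟨Ω₀, hΩ₀⟩ := htight
    -- minimal cardinality tight set
    obtain ⟨Ω₀', hmem, hmin⟩ := Finset.exists_min_image
      ((Finset.univ : Finset (Fin k)).powerset.filter Tight) Finset.card
      ⟨Ω₀, Finset.mem_filter.2 ⟨Finset.mem_powerset.2 (Finset.subset_univ _), hΩ₀⟩⟩
    have hΩ₀' : Tight Ω₀' := (Finset.mem_filter.1 hmem).2
    have hminsub : ∀ Ω, Tight Ω → Ω₀' ⊆ Ω := by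
      intro Ω hΩ
      have hTI := hinter _ _ hΩ₀' hΩ
      have hle := hmin _ (Finset.mem_filter.2 ⟨Finset.mem_powerset.2 (Finset.subset_univ _), hTI⟩)
      have heq : Ω₀' ∩ Ω = Ω₀' :=
        Finset.eq_of_subset_of_card_le Finset.inter_subset_left hle
      exact fun a ha => (Finset.mem_inter.1 (heq.symm ▸ ha : a ∈ Ω₀' ∩ Ω)).2
    obtain ⟨hi₀', htΩ₀'⟩ := hΩ₀'
    have hU₀ : 1 ≤ Module.finrank Fq ↥(V i₀ ⊓ (Ω₀'.erase i₀).sup V) := by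
      rcases Finset.eq_empty_or_nonempty (Ω₀'.erase i₀) with he | hne'
      · have hsing : Ω₀' = {i₀} := by
          apply Finset.eq_singleton_iff_unique_mem.2
          refine ⟨hi₀', fun a ha => ?_⟩
          by_contra hne2
          exact (Finset.notMem_empty a) (he ▸ Finset.mem_erase.2 ⟨hne2, ha⟩)
        rw [hsing, Finset.sup_singleton, Finset.card_singleton] at htΩ₀'
        omega
      · have hcard : (Ω₀'.erase i₀).card = Ω₀'.card - 1 := Finset.card_erase_of_mem hi₀'
        have hS := h _ hne'
        have e := Submodule.finrank_sup_add_finrank_inf_eq (V i₀) ((Ω₀'.erase i₀).sup V)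
        rw [← hVsup _ hi₀'] at e
        have hc1 : 1 ≤ Ω₀'.card := Finset.card_pos.2 ⟨i₀, hi₀'⟩
        omega
    have hbot : V i₀ ⊓ (Ω₀'.erase i₀).sup V ≠ ⊥ := by
      intro e
      rw [e, finrank_bot] at hU₀; omega
    obtain ⟨x, hxmem, hx⟩ := Submodule.exists_mem_ne_zero_of_ne_bot hbot
    obtain ⟨hx1, hx2⟩ := Submodule.mem_inf.1 hxmem
    obtain ⟨W, hWle, hWr, hxW, hWsup⟩ := exists_hyperplane (V i₀) x hx1 hx
    refine ⟨W, hWle, hWr, ?_⟩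
    intro Ω hΩ
    by_cases hi : i₀ ∈ Ω
    · by_cases hTΩ : Module.finrank Fq ↥(Ω.sup V) = n - k + Ω.card
      · -- tight: Ω₀' ⊆ Ω, so x ∈ (Ω.erase i₀).sup V and the sup does not change
        have hsub : Ω₀' ⊆ Ω := hminsub Ω ⟨hi, hTΩ⟩
        have hSle : (Ω₀'.erase i₀).sup V ≤ (Ω.erase i₀).sup V :=
          Finset.sup_mono (Finset.erase_subset_erase _ hsub)
        have hxS : x ∈ (Ω.erase i₀).sup V := hSle hx2
        have h1 : (Fq ∙ x) ⊔ (Ω.erase i₀).sup V = (Ω.erase i₀).sup V :=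
          sup_eq_right.2 ((Submodule.span_singleton_le_iff_mem x _).2 hxS)
        have h2 : W ⊔ (Ω.erase i₀).sup V = V i₀ ⊔ (Ω.erase i₀).sup V := by
          conv_lhs => rw [← h1, ← sup_assoc, hWsup]
        rw [hsupd W Ω hi, h2, ← hVsup Ω hi]
        exact h Ω hΩ
      · have hlb := h Ω hΩ
        have hdrop := drop_le_one (V i₀) W ((Ω.erase i₀).sup V) hWle hWr
        rw [← hVsup Ω hi] at hdrop
        rw [hsupd W Ω hi]
        omega
    · rw [hsame W Ω hi]
      exact h Ω hΩ
  · -- no tight set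
    push_neg at htight
    have hne : V i₀ ≠ ⊥ := by
      intro e
      rw [e, finrank_bot] at hbig; omega
    obtain ⟨x, hxA, hx⟩ := Submodule.exists_mem_ne_zero_of_ne_bot hne
    obtain ⟨W, hWle, hWr, hxW, hWsup⟩ := exists_hyperplane (V i₀) x hxA hx
    refine ⟨W, hWle, hWr, ?_⟩
    intro Ω hΩ
    by_cases hi : i₀ ∈ Ω
    · have hne' : Module.finrank Fq ↥(Ω.sup V) ≠ n - k + Ω.card :=
        fun e => htight Ω ⟨hi, e⟩
      have hlb := h Ω hΩ
      have hdrop := drop_le_one (V i₀) W ((Ω.erase i₀).sup V) hWle hWr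
      rw [← hVsup Ω hi] at hdrop
      rw [hsupd W Ω hi]
      omega
    · rw [hsame W Ω hi]
      exact h Ω hΩ

lemma hall_aux {Fq : Type*} [Field Fq] {n k : ℕ} :
    ∀ (N : ℕ) (V : Fin k → Submodule Fq (Fin n → Fq)),
      (∑ i, Module.finrank Fq ↥(V i)) ≤ N →
      (∀ Ω : Finset (Fin k), Ω.Nonempty →
        n - k + Ω.card ≤ Module.finrank Fq ↥(Ω.sup V)) →
      ∃ V' : Fin k → Submodule Fq (Fin n → Fq),
        (∀ i, V' i ≤ V i) ∧
        (∀ Ω : Finset (Fin k), Ω.Nonempty →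
          n - k + Ω.card ≤ Module.finrank Fq ↥(Ω.sup V')) ∧
        (∀ i, Module.finrank Fq ↥(V' i) = n - k + 1) := by
  intro N
  induction N with
  | zero =>
    intro V hsum h
    by_cases hall : ∀ i, Module.finrank Fq ↥(V i) = n - k + 1
    · exact ⟨V, fun i => le_rfl, h, hall⟩
    · exfalso
      push_neg at hall
      obtain ⟨i₀, hi₀⟩ := hall
      have hlb := h {i₀} ⟨i₀, Finset.mem_singleton_self i₀⟩
      rw [Finset.sup_singleton, Finset.card_singleton] at hlb
      have := Finset.single_le_sum (f := fun i => Module.finrank Fq ↥(V i))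
        (fun i _ => Nat.zero_le _) (Finset.mem_univ i₀)
      omega
  | succ N ih =>
    intro V hsum h
    by_cases hall : ∀ i, Module.finrank Fq ↥(V i) = n - k + 1
    · exact ⟨V, fun i => le_rfl, h, hall⟩
    · push_neg at hall
      obtain ⟨i₀, hi₀⟩ := hall
      have hlb := h {i₀} ⟨i₀, Finset.mem_singleton_self i₀⟩
      rw [Finset.sup_singleton, Finset.card_singleton] at hlb
      have hbig : n - k + 2 ≤ Module.finrank Fq ↥(V i₀) := by omega
      obtain ⟨W, hWle, hWr, hWcond⟩ := hall_shrink V h i₀ hbig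
      have hsum2 : (∑ i, Module.finrank Fq ↥(Function.update V i₀ W i)) ≤ N := by
        have e1 := Finset.add_sum_erase Finset.univ
          (fun i => Module.finrank Fq ↥(Function.update V i₀ W i)) (Finset.mem_univ i₀)
        have e2 := Finset.add_sum_erase Finset.univ
          (fun i => Module.finrank Fq ↥(V i)) (Finset.mem_univ i₀)
        have e3 : (∑ i ∈ Finset.univ.erase i₀,
            Module.finrank Fq ↥(Function.update V i₀ W i)) =
            ∑ i ∈ Finset.univ.erase i₀, Module.finrank Fq ↥(V i) :=
          Finset.sum_congr rfl fun i hi => by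
            rw [Function.update_of_ne (Finset.ne_of_mem_erase hi)]
        have e4 : Function.update V i₀ W i₀ = W := Function.update_self i₀ W V
        rw [e3, e4] at e1
        omega
      obtain ⟨V', h1, h2, h3⟩ := ih (Function.update V i₀ W) hsum2 hWcond
      refine ⟨V', fun i => le_trans (h1 i) ?_, h2, h3⟩
      by_cases hi : i = i₀
      · subst hi; rw [Function.update_self]; exact hWle
      · rw [Function.update_of_ne hi]


/-- Hall's theorem for vector spaces: let `n ≥ k ≥ 0` and `V_1, …, V_k` be subspaces of
`F_q^n` with `dim (∑_{i ∈ Ω} V_i) ≥ n - k + |Ω|` for every nonempty `Ω ⊆ [k]`.  Then there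
exist subspaces `V'_i ⊆ V_i` with the same property and with `dim V'_i = n - k + 1`. -/
theorem hall_vector_spaces {Fq : Type*} [Field Fq] {n k : ℕ} (hkn : k ≤ n)
    (V : Fin k → Submodule Fq (Fin n → Fq))
    (h : ∀ Ω : Finset (Fin k), Ω.Nonempty →
      n - k + Ω.card ≤ Module.finrank Fq ↥(⨆ i ∈ Ω, V i)) :
    ∃ V' : Fin k → Submodule Fq (Fin n → Fq),
      (∀ i, V' i ≤ V i) ∧
      (∀ Ω : Finset (Fin k), Ω.Nonempty →
        n - k + Ω.card ≤ Module.finrank Fq ↥(⨆ i ∈ Ω, V' i)) ∧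
      (∀ i, Module.finrank Fq ↥(V' i) = n - k + 1) := by
  have e : ∀ (U : Fin k → Submodule Fq (Fin n → Fq)) (Ω : Finset (Fin k)),
      (⨆ i ∈ Ω, U i) = Ω.sup U := fun U Ω => (Finset.sup_eq_iSup Ω U).symm
  obtain ⟨V', h1, h2, h3⟩ := hall_aux (∑ i, Module.finrank Fq ↥(V i)) V le_rfl
    (fun Ω hΩ => by rw [← e]; exact h Ω hΩ)
  exact ⟨V', h1, fun Ω hΩ => by rw [e]; exact h2 Ω hΩ, h3⟩
end

section
/- Let n ≥ k ≥ 0 and let V_1, ..., V_k be subspaces of F_q^n such that dim(⋂_{i∈Ω} V_i) ≤ k - |Ω| for every nonempty Ω ⊆ [k]. Then there exist subspaces V'_i ⊇ V_i of F_q^n for i = 1,...,k such that dim(⋂_{i∈Ω} V'_i) ≤ k - |Ω| for every nonempty Ω ⊆ [k], and dim V'_i = k - 1 for all i ∈ [k]. -/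
set_option maxHeartbeats 1000000
set_option synthInstance.maxHeartbeats 400000

open Module Submodule Function

namespace HallDualAux

variable {Fq : Type*} [Field Fq] {n k : ℕ}

private lemma dim_eq (A B : Submodule Fq (Fin n → Fq)) :
    finrank Fq ↥(A ⊔ B) + finrank Fq ↥(A ⊓ B) = finrank Fq ↥A + finrank Fq ↥B :=
  Submodule.finrank_sup_add_finrank_inf_eq A B

private lemma finrank_span_le (v : Fin n → Fq) : finrank Fq ↥(Fq ∙ v) ≤ 1 := by
  by_cases hv : v = 0
  · subst hv
    rw [Submodule.span_zero_singleton]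
    simp
  · exact le_of_eq (finrank_span_singleton hv)

private lemma inf_span_eq {A W : Submodule Fq (Fin n → Fq)} {v : Fin n → Fq}
    (hv : v ∉ A ⊔ W) : (A ⊔ Fq ∙ v) ⊓ W = A ⊓ W := by
  refine le_antisymm ?_ (inf_le_inf_right _ le_sup_left)
  intro x hx
  obtain ⟨hx1, hx2⟩ := Submodule.mem_inf.mp hx
  obtain ⟨a, ha, b, hb, rfl⟩ := Submodule.mem_sup.mp hx1
  obtain ⟨c, rfl⟩ := Submodule.mem_span_singleton.mp hb
  by_cases hc : c = 0
  · have hz : a + c • v = a := by simp [hc]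
    rw [hz] at hx2 ⊢
    exact Submodule.mem_inf.mpr ⟨ha, hx2⟩
  · exfalso
    apply hv
    have hv' : c⁻¹ • ((a + c • v) - a) = v := by
      rw [add_sub_cancel_left, smul_smul, inv_mul_cancel₀ hc, one_smul]
    rw [← hv']
    exact Submodule.smul_mem _ _ (Submodule.sub_mem _ (Submodule.mem_sup_right hx2)
      (Submodule.mem_sup_left ha))

private lemma finrank_inf_span_le (A W : Submodule Fq (Fin n → Fq)) (v : Fin n → Fq) :
    finrank Fq ↥((A ⊔ Fq ∙ v) ⊓ W) ≤ finrank Fq ↥(A ⊓ W) + 1 := by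
  have e1 := dim_eq ((A ⊔ Fq ∙ v) ⊓ W) A
  have hXA : ((A ⊔ Fq ∙ v) ⊓ W) ⊓ A = A ⊓ W := by
    rw [inf_right_comm, inf_eq_right.mpr (le_sup_left : A ≤ A ⊔ Fq ∙ v)]
  rw [hXA] at e1
  have e2 := dim_eq A (Fq ∙ v)
  have h3 : finrank Fq ↥(((A ⊔ Fq ∙ v) ⊓ W) ⊔ A) ≤ finrank Fq ↥(A ⊔ Fq ∙ v) :=
    Submodule.finrank_mono (sup_le inf_le_left le_sup_left)
  have h4 := finrank_span_le (Fq := Fq) v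
  omega

private lemma finrank_sup_span (A : Submodule Fq (Fin n → Fq)) {v : Fin n → Fq} (hv : v ∉ A) :
    finrank Fq ↥(A ⊔ Fq ∙ v) = finrank Fq ↥A + 1 := by
  have hv0 : v ≠ 0 := fun h => hv (h ▸ A.zero_mem)
  have hinf : A ⊓ (Fq ∙ v) = ⊥ := by
    rw [eq_bot_iff]
    intro x hx
    obtain ⟨hx1, hx2⟩ := Submodule.mem_inf.mp hx
    obtain ⟨c, rfl⟩ := Submodule.mem_span_singleton.mp hx2
    rcases eq_or_ne c 0 with rfl | hc
    · simp
    · exfalso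
      have h1 := A.smul_mem c⁻¹ hx1
      rw [smul_smul, inv_mul_cancel₀ hc, one_smul] at h1
      exact hv h1
  have e := dim_eq A (Fq ∙ v)
  rw [hinf, finrank_span_singleton hv0, finrank_bot] at e
  omega

private lemma finrank_sup_finset_le (A : Submodule Fq (Fin n → Fq))
    (𝒰 : Finset (Submodule Fq (Fin n → Fq)))
    (hle : ∀ U ∈ 𝒰, A ≤ U) (hfr : ∀ U ∈ 𝒰, finrank Fq ↥U ≤ finrank Fq ↥A + 1) :
    finrank Fq ↥(A ⊔ 𝒰.sup id) ≤ finrank Fq ↥A + 𝒰.card := by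
  classical
  induction 𝒰 using Finset.induction_on with
  | empty =>
    rw [Finset.sup_empty, sup_bot_eq]
    simp
  | @insert U 𝒰 hU ih =>
    rw [Finset.sup_insert]
    have h1 : A ⊔ (id U ⊔ 𝒰.sup id) = U ⊔ (A ⊔ 𝒰.sup id) := by
      rw [id]; rw [sup_left_comm]
    rw [h1]
    have e := dim_eq U (A ⊔ 𝒰.sup id)
    have hA1 : A ≤ U ⊓ (A ⊔ 𝒰.sup id) :=
      le_inf (hle U (Finset.mem_insert_self U 𝒰)) le_sup_left
    have h2 := Submodule.finrank_mono hA1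
    have hU1 := hfr U (Finset.mem_insert_self U 𝒰)
    have ih' := ih (fun U h => hle U (Finset.mem_insert_of_mem h))
      (fun U h => hfr U (Finset.mem_insert_of_mem h))
    rw [Finset.card_insert_of_notMem hU]
    omega

private lemma inf_decomp {V : Fin k → Submodule Fq (Fin n → Fq)} {Ω : Finset (Fin k)} {j : Fin k}
    (hj : j ∈ Ω) : Ω.inf V = V j ⊓ (Ω.erase j).inf V := by
  conv_lhs => rw [← Finset.insert_erase hj]
  rw [Finset.inf_insert]

private lemma inf_update_of_notMem {V : Fin k → Submodule Fq (Fin n → Fq)} {Ω : Finset (Fin k)}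
    {j : Fin k} (hj : j ∉ Ω) (N : Submodule Fq (Fin n → Fq)) :
    Ω.inf (Function.update V j N) = Ω.inf V := by
  refine Finset.inf_congr rfl fun i hi => ?_
  have hij : i ≠ j := by rintro rfl; exact hj hi
  rw [Function.update_of_ne hij]

private lemma inf_update_of_mem {V : Fin k → Submodule Fq (Fin n → Fq)} {Ω : Finset (Fin k)}
    {j : Fin k} (hj : j ∈ Ω) (N : Submodule Fq (Fin n → Fq)) :
    Ω.inf (Function.update V j N) = N ⊓ (Ω.erase j).inf V := by
  conv_lhs => rw [← Finset.insert_erase hj]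
  rw [Finset.inf_insert, Function.update_self]
  congr 1
  refine Finset.inf_congr rfl fun i hi => ?_
  rw [Function.update_of_ne (Finset.ne_of_mem_erase hi)]

/-- The generic kernel pattern condition, as a `Finset.inf`. -/
def Generic (V : Fin k → Submodule Fq (Fin n → Fq)) : Prop :=
  ∀ Ω : Finset (Fin k), Ω.Nonempty → finrank Fq ↥(Ω.inf V) ≤ k - Ω.card

private lemma key (hkn : k ≤ n) {V : Fin k → Submodule Fq (Fin n → Fq)} (hV : Generic V)
    (j : Fin k) (hd : finrank Fq ↥(V j) + 2 ≤ k) :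
    ∃ v : Fin n → Fq, v ∉ V j ∧ Generic (Function.update V j (V j ⊔ Fq ∙ v)) := by
  classical
  set d := finrank Fq ↥(V j) with hdd
  set T : Finset (Finset (Fin k)) :=
    Finset.univ.filter (fun Ω => j ∈ Ω ∧ finrank Fq ↥(Ω.inf V) = k - Ω.card) with hT
  set S : Submodule Fq (Fin n → Fq) := V j ⊔ T.sup (fun Ω => (Ω.erase j).inf V) with hS
  have fact : ∀ Ω ∈ T, V j ⊔ (Ω.erase j).inf V ≠ V j →
      j ∈ Ω ∧ 2 ≤ Ω.card ∧ Ω.card ≤ k ∧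
      finrank Fq ↥(V j ⊓ (Ω.erase j).inf V) = k - Ω.card ∧
      finrank Fq ↥((Ω.erase j).inf V) = k - Ω.card + 1 ∧
      finrank Fq ↥(V j ⊔ (Ω.erase j).inf V) = d + 1 := by
    intro Ω hΩ hne
    rw [hT, Finset.mem_filter] at hΩ
    obtain ⟨-, hjΩ, hfr⟩ := hΩ
    have hcardk : Ω.card ≤ k := by
      have := Finset.card_le_univ Ω
      simpa using this
    have hdec : Ω.inf V = V j ⊓ (Ω.erase j).inf V := inf_decomp hjΩ
    have hcard2 : 2 ≤ Ω.card := by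
      by_contra hlt
      push_neg at hlt
      have hpos := Finset.card_pos.mpr ⟨j, hjΩ⟩
      have h1 : Ω.card = 1 := by omega
      obtain ⟨a, ha⟩ := Finset.card_eq_one.mp h1
      have haj : a = j := by
        have := hjΩ
        rw [ha, Finset.mem_singleton] at this
        exact this.symm
      rw [ha, haj, Finset.inf_singleton] at hfr
      rw [ha, Finset.card_singleton] at *
      omega
    have herased : (Ω.erase j).Nonempty := by
      rw [← Finset.card_pos, Finset.card_erase_of_mem hjΩ]
      omega
    have hWle : finrank Fq ↥((Ω.erase j).inf V) ≤ k - (Ω.card - 1) := by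
      have := hV (Ω.erase j) herased
      rwa [Finset.card_erase_of_mem hjΩ] at this
    have e := dim_eq (V j) ((Ω.erase j).inf V)
    rw [← hdec, hfr] at e
    have hge : d + 1 ≤ finrank Fq ↥(V j ⊔ (Ω.erase j).inf V) := by
      by_contra hc
      push_neg at hc
      exact hne (Submodule.eq_of_le_of_finrank_le le_sup_left (by omega)).symm
    refine ⟨hjΩ, hcard2, hcardk, by rw [← hdec]; exact hfr, ?_, ?_⟩ <;> omega
  have hS_ne : S ≠ ⊤ := by
    intro htop
    set 𝒰 : Finset (Submodule Fq (Fin n → Fq)) :=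
      (T.image (fun Ω => V j ⊔ (Ω.erase j).inf V)).erase (V j) with h𝒰
    have hsup : V j ⊔ 𝒰.sup id = S := by
      apply le_antisymm
      · refine sup_le (by rw [hS]; exact le_sup_left) (Finset.sup_le ?_)
        intro U hU
        obtain ⟨Ω, hΩ, rfl⟩ := Finset.mem_image.mp (Finset.mem_of_mem_erase hU)
        rw [hS]
        exact sup_le le_sup_left
          (le_trans (Finset.le_sup (f := fun Ω : Finset (Fin k) => (Ω.erase j).inf V) hΩ)
            le_sup_right)
      · rw [hS]
        refine sup_le le_sup_left (Finset.sup_le ?_)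
        intro Ω hΩ
        by_cases hne : V j ⊔ (Ω.erase j).inf V = V j
        · calc (Ω.erase j).inf V ≤ V j ⊔ (Ω.erase j).inf V := le_sup_right
            _ = V j := hne
            _ ≤ _ := le_sup_left
        · have hmem : V j ⊔ (Ω.erase j).inf V ∈ 𝒰 :=
            Finset.mem_erase.mpr ⟨hne, Finset.mem_image_of_mem _ hΩ⟩
          calc (Ω.erase j).inf V ≤ V j ⊔ (Ω.erase j).inf V := le_sup_right
            _ ≤ 𝒰.sup id := Finset.le_sup (f := id) hmem
            _ ≤ _ := le_sup_right
    have hUprops : ∀ U ∈ 𝒰, V j ≤ U ∧ finrank Fq ↥U ≤ d + 1 := by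
      intro U hU
      obtain ⟨hUne, hUim⟩ := Finset.mem_erase.mp hU
      obtain ⟨Ω, hΩ, rfl⟩ := Finset.mem_image.mp hUim
      obtain ⟨_, _, _, _, _, h6⟩ := fact Ω hΩ hUne
      exact ⟨le_sup_left, le_of_eq h6⟩
    have hcard : n ≤ d + 𝒰.card := by
      have h1 := finrank_sup_finset_le (V j) 𝒰 (fun U hU => (hUprops U hU).1)
        (fun U hU => (hUprops U hU).2)
      rw [hsup, htop] at h1
      have htopfr : finrank Fq ↥(⊤ : Submodule Fq (Fin n → Fq)) = n := by
        rw [finrank_top, Module.finrank_fin_fun]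
      omega
    have h2 : 1 < 𝒰.card := by omega
    obtain ⟨U1, hU1, U2, hU2, hne12⟩ := Finset.one_lt_card.mp h2
    obtain ⟨hU1ne, hU1im⟩ := Finset.mem_erase.mp hU1
    obtain ⟨Ω1, hΩ1, hU1eq⟩ := Finset.mem_image.mp hU1im
    obtain ⟨hU2ne, hU2im⟩ := Finset.mem_erase.mp hU2
    obtain ⟨Ω2, hΩ2, hU2eq⟩ := Finset.mem_image.mp hU2im
    subst hU1eq
    subst hU2eq
    obtain ⟨hj1, hc1, hk1, hinf1, hw1, hu1⟩ := fact Ω1 hΩ1 hU1ne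
    obtain ⟨hj2, hc2, hk2, hinf2, hw2, hu2⟩ := fact Ω2 hΩ2 hU2ne
    have hinter : (V j ⊔ (Ω1.erase j).inf V) ⊓ (V j ⊔ (Ω2.erase j).inf V) = V j := by
      have e := dim_eq (V j ⊔ (Ω1.erase j).inf V) (V j ⊔ (Ω2.erase j).inf V)
      have hsupge : d + 2 ≤
          finrank Fq ↥((V j ⊔ (Ω1.erase j).inf V) ⊔ (V j ⊔ (Ω2.erase j).inf V)) := by
        by_contra hc
        push_neg at hc
        have heq1 : V j ⊔ (Ω1.erase j).inf V
            = (V j ⊔ (Ω1.erase j).inf V) ⊔ (V j ⊔ (Ω2.erase j).inf V) :=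
          Submodule.eq_of_le_of_finrank_le le_sup_left (by omega)
        have h2le : V j ⊔ (Ω2.erase j).inf V ≤ V j ⊔ (Ω1.erase j).inf V :=
          heq1 ▸ le_sup_right
        exact hne12 (Submodule.eq_of_le_of_finrank_le h2le (by omega)).symm
      have hVle : V j ≤ (V j ⊔ (Ω1.erase j).inf V) ⊓ (V j ⊔ (Ω2.erase j).inf V) :=
        le_inf le_sup_left le_sup_left
      have h3 := Submodule.finrank_mono hVle
      exact (Submodule.eq_of_le_of_finrank_le hVle (by omega)).symm
    have hWW : (Ω1.erase j).inf V ⊓ (Ω2.erase j).inf V ≤ V j :=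
      le_trans (inf_le_inf le_sup_right le_sup_right) (le_of_eq hinter)
    have hunion_inf : (Ω1 ∪ Ω2).inf V
        = V j ⊓ ((Ω1.erase j).inf V ⊓ (Ω2.erase j).inf V) := by
      rw [Finset.inf_union, inf_decomp hj1, inf_decomp hj2, ← inf_inf_distrib_left]
    have hunion_eq : (Ω1 ∪ Ω2).inf V = (Ω1.erase j).inf V ⊓ (Ω2.erase j).inf V := by
      rw [hunion_inf, inf_eq_right.mpr hWW]
    have hunion_le : finrank Fq ↥((Ω1 ∪ Ω2).inf V) ≤ k - (Ω1 ∪ Ω2).card :=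
      hV _ ⟨j, Finset.mem_union_left _ hj1⟩
    have hcardunion : (Ω1 ∪ Ω2).card + (Ω1 ∩ Ω2).card = Ω1.card + Ω2.card :=
      Finset.card_union_add_card_inter Ω1 Ω2
    have hcarduk : (Ω1 ∪ Ω2).card ≤ k := by
      have := Finset.card_le_univ (Ω1 ∪ Ω2)
      simpa using this
    by_cases hcap : ((Ω1 ∩ Ω2).erase j).Nonempty
    · have hsub1 : (Ω1 ∩ Ω2).erase j ⊆ Ω1.erase j :=
        Finset.erase_subset_erase j Finset.inter_subset_left
      have hsub2 : (Ω1 ∩ Ω2).erase j ⊆ Ω2.erase j :=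
        Finset.erase_subset_erase j Finset.inter_subset_right
      have hWles : (Ω1.erase j).inf V ⊔ (Ω2.erase j).inf V ≤ ((Ω1 ∩ Ω2).erase j).inf V :=
        sup_le (Finset.inf_mono hsub1) (Finset.inf_mono hsub2)
      have hWsup_le : finrank Fq ↥((Ω1.erase j).inf V ⊔ (Ω2.erase j).inf V)
          ≤ k - ((Ω1 ∩ Ω2).erase j).card :=
        le_trans (Submodule.finrank_mono hWles) (hV _ hcap)
      have e := dim_eq ((Ω1.erase j).inf V) ((Ω2.erase j).inf V)
      have hWinf_le : finrank Fq ↥((Ω1.erase j).inf V ⊓ (Ω2.erase j).inf V)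
          ≤ k - (Ω1 ∪ Ω2).card := hunion_eq ▸ hunion_le
      have hcarderase : ((Ω1 ∩ Ω2).erase j).card = (Ω1 ∩ Ω2).card - 1 :=
        Finset.card_erase_of_mem (Finset.mem_inter.mpr ⟨hj1, hj2⟩)
      have hcapcard : 2 ≤ (Ω1 ∩ Ω2).card := by
        obtain ⟨i, hi⟩ := hcap
        have hi1 : i ∈ Ω1 ∩ Ω2 := Finset.mem_of_mem_erase hi
        have hij : i ≠ j := Finset.ne_of_mem_erase hi
        have hjmem : j ∈ Ω1 ∩ Ω2 := Finset.mem_inter.mpr ⟨hj1, hj2⟩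
        exact Finset.one_lt_card.mpr ⟨i, hi1, j, hjmem, hij⟩
      have hik : (Ω1 ∩ Ω2).card ≤ Ω1.card := Finset.card_le_card Finset.inter_subset_left
      omega
    · have hcapeq : (Ω1 ∩ Ω2).card = 1 := by
        rw [Finset.not_nonempty_iff_eq_empty] at hcap
        have hsub : Ω1 ∩ Ω2 ⊆ {j} := by
          intro x hx
          rcases eq_or_ne x j with rfl | hxj
          · simp
          · exfalso
            have : x ∈ (Ω1 ∩ Ω2).erase j := Finset.mem_erase.mpr ⟨hxj, hx⟩
            rw [hcap] at this
            simp at this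
        have hjs : j ∈ Ω1 ∩ Ω2 := Finset.mem_inter.mpr ⟨hj1, hj2⟩
        have h1 := Finset.card_le_card hsub
        have h2 := Finset.card_pos.mpr ⟨j, hjs⟩
        simp only [Finset.card_singleton] at h1
        omega
      have e := dim_eq (V j ⊓ (Ω1.erase j).inf V) ((Ω2.erase j).inf V)
      have h1 : (V j ⊓ (Ω1.erase j).inf V) ⊔ (Ω2.erase j).inf V
          ≤ V j ⊔ (Ω2.erase j).inf V :=
        sup_le (le_trans inf_le_left le_sup_left) le_sup_right
      have h1' : finrank Fq ↥((V j ⊓ (Ω1.erase j).inf V) ⊔ (Ω2.erase j).inf V) ≤ d + 1 :=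
        le_trans (Submodule.finrank_mono h1) (le_of_eq hu2)
      have h2eq : (V j ⊓ (Ω1.erase j).inf V) ⊓ (Ω2.erase j).inf V = (Ω1 ∪ Ω2).inf V := by
        rw [hunion_inf, inf_assoc]
      have h2' : finrank Fq ↥((V j ⊓ (Ω1.erase j).inf V) ⊓ (Ω2.erase j).inf V)
          ≤ k - (Ω1 ∪ Ω2).card := h2eq ▸ hunion_le
      omega
  have hlt : S < ⊤ := lt_top_iff_ne_top.mpr hS_ne
  obtain ⟨v, -, hvS⟩ := SetLike.exists_of_lt hlt
  have hVjS : V j ≤ S := by rw [hS]; exact le_sup_left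
  have hvj : v ∉ V j := fun hv => hvS (hVjS hv)
  refine ⟨v, hvj, ?_⟩
  intro Ω hne
  by_cases hj : j ∈ Ω
  · rw [inf_update_of_mem hj]
    by_cases htight : finrank Fq ↥(Ω.inf V) = k - Ω.card
    · have hΩT : Ω ∈ T := by
        rw [hT, Finset.mem_filter]
        exact ⟨Finset.mem_univ _, hj, htight⟩
      have hWS : V j ⊔ (Ω.erase j).inf V ≤ S := by
        rw [hS]
        exact sup_le le_sup_left
          (le_trans (Finset.le_sup (f := fun Ω : Finset (Fin k) => (Ω.erase j).inf V) hΩT)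
            le_sup_right)
      have hvnot : v ∉ V j ⊔ (Ω.erase j).inf V := fun hv => hvS (hWS hv)
      rw [inf_span_eq hvnot, ← inf_decomp hj]
      exact hV Ω hne
    · have h4 := finrank_inf_span_le (V j) ((Ω.erase j).inf V) v
      have h5 : finrank Fq ↥(V j ⊓ (Ω.erase j).inf V) = finrank Fq ↥(Ω.inf V) := by
        rw [inf_decomp hj]
      have h6 := hV Ω hne
      omega
  · rw [inf_update_of_notMem hj]
    exact hV Ω hne

private lemma aux (hkn : k ≤ n) : ∀ (t : ℕ) (V : Fin k → Submodule Fq (Fin n → Fq)),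
    Generic V → (∑ i, (k - 1 - finrank Fq ↥(V i))) ≤ t →
    ∃ V' : Fin k → Submodule Fq (Fin n → Fq), (∀ i, V i ≤ V' i) ∧ Generic V' ∧
      ∀ i, finrank Fq ↥(V' i) = k - 1 := by
  intro t
  induction t with
  | zero =>
    intro V hV hsum
    refine ⟨V, fun i => le_rfl, hV, fun i => ?_⟩
    have h1 : finrank Fq ↥(V i) ≤ k - 1 := by
      have := hV {i} ⟨i, Finset.mem_singleton_self i⟩
      rwa [Finset.inf_singleton, Finset.card_singleton] at this
    have h2 : k - 1 - finrank Fq ↥(V i) = 0 :=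
      Finset.sum_eq_zero_iff.mp (Nat.le_zero.mp hsum) i (Finset.mem_univ i)
    omega
  | succ t ih =>
    intro V hV hsum
    by_cases hall : ∀ i, finrank Fq ↥(V i) = k - 1
    · exact ⟨V, fun i => le_rfl, hV, hall⟩
    · push_neg at hall
      obtain ⟨j, hj⟩ := hall
      have hjle : finrank Fq ↥(V j) ≤ k - 1 := by
        have := hV {j} ⟨j, Finset.mem_singleton_self j⟩
        rwa [Finset.inf_singleton, Finset.card_singleton] at this
      have hd : finrank Fq ↥(V j) + 2 ≤ k := by omega
      obtain ⟨v, hv, hgen⟩ := key hkn hV j hd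
      set V'' := Function.update V j (V j ⊔ Fq ∙ v) with hV''
      have hfr'' : finrank Fq ↥(V'' j) = finrank Fq ↥(V j) + 1 := by
        rw [hV'', Function.update_self]
        exact finrank_sup_span (V j) hv
      have hfr''o : ∀ i, i ≠ j → V'' i = V i := by
        intro i hi
        rw [hV'', Function.update_of_ne hi]
      have hsum'' : (∑ i, (k - 1 - finrank Fq ↥(V'' i))) ≤ t := by
        have e1 : (k - 1 - finrank Fq ↥(V j))
            + ∑ i ∈ Finset.univ.erase j, (k - 1 - finrank Fq ↥(V i))
            = ∑ i, (k - 1 - finrank Fq ↥(V i)) :=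
          Finset.add_sum_erase Finset.univ (fun i => k - 1 - finrank Fq ↥(V i))
            (Finset.mem_univ j)
        have e2 : (k - 1 - finrank Fq ↥(V'' j))
            + ∑ i ∈ Finset.univ.erase j, (k - 1 - finrank Fq ↥(V'' i))
            = ∑ i, (k - 1 - finrank Fq ↥(V'' i)) :=
          Finset.add_sum_erase Finset.univ (fun i => k - 1 - finrank Fq ↥(V'' i))
            (Finset.mem_univ j)
        have e3 : ∑ i ∈ Finset.univ.erase j, (k - 1 - finrank Fq ↥(V'' i))
            = ∑ i ∈ Finset.univ.erase j, (k - 1 - finrank Fq ↥(V i)) :=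
          Finset.sum_congr rfl fun i hi => by rw [hfr''o i (Finset.ne_of_mem_erase hi)]
        rw [e3] at e2
        omega
      obtain ⟨V', hle, hgen', hfr'⟩ := ih V'' hgen hsum''
      refine ⟨V', fun i => ?_, hgen', hfr'⟩
      rcases eq_or_ne i j with rfl | hij
      · have hle1 : V i ≤ V'' i := by
          rw [hV'', Function.update_self]
          exact le_sup_left
        exact hle1.trans (hle i)
      · exact (le_of_eq (hfr''o i hij).symm).trans (hle i)

end HallDualAux

/-- Hall's theorem for vector spaces, dual version: let `n ≥ k ≥ 0` and `V_1, …, V_k` be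
subspaces of `F_q^n` with `dim (⋂_{i ∈ Ω} V_i) ≤ k - |Ω|` for every nonempty `Ω ⊆ [k]`.
Then there exist subspaces `V'_i ⊇ V_i` with the same property and `dim V'_i = k - 1`. -/
theorem hall_vector_spaces_dual {Fq : Type*} [Field Fq] {n k : ℕ} (hkn : k ≤ n)
    (V : Fin k → Submodule Fq (Fin n → Fq))
    (h : ∀ Ω : Finset (Fin k), Ω.Nonempty →
      Module.finrank Fq ↥(⨅ i ∈ Ω, V i) ≤ k - Ω.card) :
    ∃ V' : Fin k → Submodule Fq (Fin n → Fq),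
      (∀ i, V i ≤ V' i) ∧
      (∀ Ω : Finset (Fin k), Ω.Nonempty →
        Module.finrank Fq ↥(⨅ i ∈ Ω, V' i) ≤ k - Ω.card) ∧
      (∀ i, Module.finrank Fq ↥(V' i) = k - 1) := by
  have hG : HallDualAux.Generic V := by
    intro Ω hΩ
    rw [Finset.inf_eq_iInf]
    exact h Ω hΩ
  obtain ⟨V', h1, h2, h3⟩ := HallDualAux.aux hkn
    (∑ i, (k - 1 - Module.finrank Fq ↥(V i))) V hG le_rfl
  exact ⟨V', h1, fun Ω hΩ => by rw [← Finset.inf_eq_iInf]; exact h2 Ω hΩ, h3⟩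
end

section
/- Let n ≥ k ≥ 0, let V_1, ..., V_ℓ be subspaces of F_q^n, each of dimension at most k, and let δ_1, ..., δ_ℓ ≥ 0 be integers. Then the following are equivalent: (1) for every nonempty Ω ⊆ [ℓ], dim(⋂_{i∈Ω} V_i) ≤ k - ∑_{i∈Ω} δ_i; (2) the k-tuple consisting of δ_i copies of V_i for each i ∈ [ℓ] together with k - ∑_i δ_i copies of the zero subspace is a generic kernel pattern, i.e., for every nonempty subset Ω' of its index set, the dimension of the intersection of the corresponding subspaces is at most k - |Ω'|. -/
/-- Let `n ≥ k ≥ 0`, let `V_1, …, V_ℓ` be subspaces of `F_q^n` of dimension at most `k`,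
and let `δ_1, …, δ_ℓ ≥ 0` be integers with `∑ δ_i ≤ k`.  The following are equivalent:
1. for every nonempty `Ω ⊆ [ℓ]`, `dim (⋂_{i ∈ Ω} V_i) ≤ k - ∑_{i ∈ Ω} δ_i`;
2. the `k`-tuple consisting of `δ_i` copies of `V_i` together with `k - ∑ δ_i` copies of
the zero subspace is a generic kernel pattern.  (The tuple is encoded as the multiset
`(k - ∑ δ_i) • {⊥} + ∑ i, δ_i • {V_i}`; the generic-kernel-pattern condition says that for
every nonempty sub(multi)set `S` of positions, the dimension of the intersection of the
corresponding subspaces is at most `k - |S|`.) -/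
theorem gkp_copies_iff {Fq : Type*} [Field Fq] {n k ℓ : ℕ} (hkn : k ≤ n)
    (V : Fin ℓ → Submodule Fq (Fin n → Fq))
    (hV : ∀ i, Module.finrank Fq ↥(V i) ≤ k)
    (δ : Fin ℓ → ℕ) (hδ : ∑ i, δ i ≤ k) :
    (∀ Ω : Finset (Fin ℓ), Ω.Nonempty →
        (Module.finrank Fq ↥(⨅ i ∈ Ω, V i) : ℤ) ≤ (k : ℤ) - ∑ i ∈ Ω, (δ i : ℤ)) ↔
    (∀ S : Multiset (Submodule Fq (Fin n → Fq)),
        S ≤ Multiset.replicate (k - ∑ i, δ i) (⊥ : Submodule Fq (Fin n → Fq)) +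
              ∑ i, Multiset.replicate (δ i) (V i) →
        S ≠ 0 →
        Module.finrank Fq ↥(sInf {U | U ∈ S}) ≤ k - Multiset.card S) := by
  classical
  constructor
  · intro h1 S hS hS0
    by_cases hbot : (⊥ : Submodule Fq (Fin n → Fq)) ∈ S
    · have hb : sInf {U | U ∈ S} = ⊥ := le_bot_iff.mp (sInf_le hbot)
      rw [hb, finrank_bot]
      exact Nat.zero_le _
    · set Ω : Finset (Fin ℓ) := Finset.univ.filter (fun i => V i ∈ S) with hΩdef
      have hmem : ∀ U ∈ S, ∃ i ∈ Ω, V i = U := by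
        intro U hU
        have hUT := Multiset.mem_of_le hS hU
        rw [Multiset.mem_add] at hUT
        rcases hUT with h | h
        · exact absurd (Multiset.eq_of_mem_replicate h ▸ hU) hbot
        · rw [Multiset.mem_sum] at h
          obtain ⟨i, _, hi⟩ := h
          have hiU := Multiset.eq_of_mem_replicate hi
          exact ⟨i, Finset.mem_filter.mpr ⟨Finset.mem_univ i, hiU ▸ hU⟩, hiU.symm⟩
      have hΩne : Ω.Nonempty := by
        obtain ⟨U, hU⟩ := Multiset.exists_mem_of_ne_zero hS0
        obtain ⟨i, hi, _⟩ := hmem U hU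
        exact ⟨i, hi⟩
      have hSle : S ≤ ∑ i ∈ Ω, Multiset.replicate (δ i) (V i) := by
        rw [Multiset.le_iff_count]
        intro U
        by_cases hU : U ∈ S
        · have hUb : U ≠ ⊥ := fun h => hbot (h ▸ hU)
          have hcount := Multiset.le_iff_count.mp hS U
          rw [Multiset.count_add, Multiset.count_replicate, if_neg (Ne.symm hUb)] at hcount
          simp only [Multiset.count_sum', Multiset.count_replicate] at hcount ⊢
          refine le_trans hcount (le_of_eq ?_)
          rw [zero_add]
          refine (Finset.sum_subset (Finset.subset_univ Ω) ?_).symm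
          intro i _ hiΩ
          have : V i ≠ U := by
            intro h
            exact hiΩ (Finset.mem_filter.mpr ⟨Finset.mem_univ i, h ▸ hU⟩)
          rw [if_neg this]
        · simp [Multiset.count_eq_zero_of_notMem hU]
      have hcard : Multiset.card S ≤ ∑ i ∈ Ω, δ i := by
        have := Multiset.card_le_card hSle
        simpa using this
      have hΩk : ∑ i ∈ Ω, δ i ≤ k :=
        le_trans (Finset.sum_le_sum_of_subset (Finset.subset_univ Ω)) hδ
      have hmono : sInf {U | U ∈ S} ≤ ⨅ i ∈ Ω, V i := by
        refine le_iInf₂ fun i hi => sInf_le ?_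
        exact (Finset.mem_filter.mp hi).2
      have hfr : Module.finrank Fq ↥(sInf {U | U ∈ S}) ≤
          Module.finrank Fq ↥(⨅ i ∈ Ω, V i) := Submodule.finrank_mono hmono
      have hint := h1 Ω hΩne
      rw [← Nat.cast_sum] at hint
      omega
  · intro h2 Ω hΩ
    rw [← Nat.cast_sum]
    by_cases hzero : ∑ i ∈ Ω, δ i = 0
    · obtain ⟨i0, hi0⟩ := hΩ
      have hle : (⨅ i ∈ Ω, V i) ≤ V i0 := biInf_le _ hi0
      have h1 : Module.finrank Fq ↥(⨅ i ∈ Ω, V i) ≤ k :=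
        le_trans (Submodule.finrank_mono hle) (hV i0)
      omega
    · set S : Multiset (Submodule Fq (Fin n → Fq)) :=
        ∑ i ∈ Ω, Multiset.replicate (δ i) (V i) with hSdef
      have hcard : Multiset.card S = ∑ i ∈ Ω, δ i := by
        simp [hSdef]
      have hS0 : S ≠ 0 := by
        intro h
        rw [h] at hcard
        simp at hcard
        omega
      have hle : S ≤ Multiset.replicate (k - ∑ i, δ i) (⊥ : Submodule Fq (Fin n → Fq)) +
          ∑ i, Multiset.replicate (δ i) (V i) := by
        refine le_trans ?_ (Multiset.le_add_left _ _)
        exact Finset.sum_le_sum_of_subset (Finset.subset_univ Ω)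
      have h := h2 S hle hS0
      have hmono : (⨅ i ∈ Ω, V i) ≤ sInf {U | U ∈ S} := by
        refine le_sInf fun U hU => ?_
        obtain ⟨i, hi, hiU⟩ := Multiset.mem_sum.mp hU
        rw [Multiset.eq_of_mem_replicate hiU]
        exact biInf_le _ hi
      have hfr := Submodule.finrank_mono hmono
      have hΩk : ∑ i ∈ Ω, δ i ≤ k :=
        le_trans (Finset.sum_le_sum_of_subset (Finset.subset_univ Ω)) hδ
      rw [hcard] at h
      omega
end

section
/- Let n ≥ k ≥ d ≥ 0 and let V_1, ..., V_ℓ be subspaces of F_q^n, each of dimension at most k. Then the following are equivalent: (a) there exist integers δ_1,...,δ_ℓ ≥ 0 with ∑_{i=1}^ℓ δ_i = k - d such that dim(⋂_{i∈Ω} V_i) ≤ k - ∑_{i∈Ω} δ_i for every nonempty Ω ⊆ [ℓ]; (b) for every partition P_1 ⊔ ... ⊔ P_s = [ℓ], ∑_{i=1}^s dim(⋂_{j∈P_i} V_j) ≤ (s-1)k + d. -/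
open Finset

/-- Abstract Dilworth-truncation style existence lemma. -/
lemma gkp_dilworth_aux {ℓ : ℕ} (m : ℕ) :
    ∀ (g : Finset (Fin ℓ) → ℤ),
      (∀ Ω : Finset (Fin ℓ), Ω.Nonempty → 0 ≤ g Ω) →
      (∀ A B : Finset (Fin ℓ), (A ∩ B).Nonempty → g (A ∪ B) + g (A ∩ B) ≤ g A + g B) →
      (∀ Pp : Finset (Finset (Fin ℓ)), (∀ Z ∈ Pp, Z.Nonempty) →
        ((Pp : Set (Finset (Fin ℓ))).PairwiseDisjoint id) →
        (∀ i : Fin ℓ, ∃ Z ∈ Pp, i ∈ Z) → (m : ℤ) ≤ ∑ Z ∈ Pp, g Z) →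
      ∃ δ : Fin ℓ → ℕ, ∑ i, δ i = m ∧
        ∀ Ω : Finset (Fin ℓ), Ω.Nonempty → (∑ i ∈ Ω, (δ i : ℤ)) ≤ g Ω := by
  induction m with
  | zero =>
    intro g hpos _ _
    exact ⟨0, by simp, fun Ω hΩ => by simpa using hpos Ω hΩ⟩
  | succ m ih =>
    intro g hpos hsub hpart
    classical
    have hi0 : ∃ i₀ : Fin ℓ, ∀ Ω : Finset (Fin ℓ), i₀ ∈ Ω → 1 ≤ g Ω := by
      by_contra hcon
      push_neg at hcon
      -- every i lies in a zero set; choose one of maximal cardinality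
      have hZ : ∀ i : Fin ℓ, ∃ Z : Finset (Fin ℓ), i ∈ Z ∧ g Z = 0 ∧
          ∀ W : Finset (Fin ℓ), i ∈ W → g W = 0 → W.card ≤ Z.card := by
        intro i
        obtain ⟨Ω, hiΩ, hΩlt⟩ := hcon i
        have hΩ0 : g Ω = 0 := le_antisymm (by omega) (hpos Ω ⟨i, hiΩ⟩)
        set S : Finset (Finset (Fin ℓ)) :=
          univ.powerset.filter (fun W => i ∈ W ∧ g W = 0) with hS
        have hmem : ∀ W : Finset (Fin ℓ), W ∈ S ↔ i ∈ W ∧ g W = 0 := by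
          intro W; simp [hS]
        have hSne : S.Nonempty := ⟨Ω, (hmem Ω).2 ⟨hiΩ, hΩ0⟩⟩
        obtain ⟨Z, hZS, hZmax⟩ := S.exists_max_image card hSne
        rw [hmem] at hZS
        exact ⟨Z, hZS.1, hZS.2, fun W h1 h2 => hZmax W ((hmem W).2 ⟨h1, h2⟩)⟩
      choose Z hZ1 hZ2 hZ3 using hZ
      have key : ∀ i j, (Z i ∩ Z j).Nonempty → Z i = Z j := by
        intro i j hne
        have h1 := hsub (Z i) (Z j) hne
        have h2 := hpos (Z i ∩ Z j) hne
        have h3 : (Z i ∪ Z j).Nonempty := ⟨i, mem_union_left _ (hZ1 i)⟩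
        have h4 := hpos _ h3
        have h0 : g (Z i ∪ Z j) = 0 := by rw [hZ2 i, hZ2 j] at h1; omega
        have e1 : Z i = Z i ∪ Z j :=
          eq_of_subset_of_card_le subset_union_left
            (hZ3 i _ (mem_union_left _ (hZ1 i)) h0)
        have e2 : Z j = Z i ∪ Z j :=
          eq_of_subset_of_card_le subset_union_right
            (hZ3 j _ (mem_union_right _ (hZ1 j)) h0)
        exact e1.trans e2.symm
      set Pp : Finset (Finset (Fin ℓ)) := univ.image Z with hPp
      have hmemPp : ∀ W, W ∈ Pp ↔ ∃ i, Z i = W := by intro W; simp [hPp]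
      have hb := hpart Pp
        (by intro W hW; obtain ⟨i, rfl⟩ := (hmemPp W).1 hW; exact ⟨i, hZ1 i⟩)
        (by
          intro x hx y hy hxy
          obtain ⟨i, rfl⟩ := (hmemPp x).1 hx
          obtain ⟨j, rfl⟩ := (hmemPp y).1 hy
          refine Finset.disjoint_left.2 fun a ha ha' => ?_
          exact hxy (key i j ⟨a, mem_inter.2 ⟨ha, ha'⟩⟩))
        (fun i => ⟨Z i, (hmemPp _).2 ⟨i, rfl⟩, hZ1 i⟩)
      have hz : ∑ W ∈ Pp, g W = 0 := by
        refine Finset.sum_eq_zero fun W hW => ?_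
        obtain ⟨i, rfl⟩ := (hmemPp W).1 hW
        exact hZ2 i
      rw [hz] at hb
      push_cast at hb
      omega
    obtain ⟨i₀, hi₀⟩ := hi0
    set g' : Finset (Fin ℓ) → ℤ := fun Ω => g Ω - (if i₀ ∈ Ω then 1 else 0) with hg'
    have hpos' : ∀ Ω : Finset (Fin ℓ), Ω.Nonempty → 0 ≤ g' Ω := by
      intro Ω hΩ
      by_cases h : i₀ ∈ Ω
      · have := hi₀ Ω h; simp [hg', h]; omega
      · have := hpos Ω hΩ; simp [hg', h]; omega
    have hsub' : ∀ A B : Finset (Fin ℓ), (A ∩ B).Nonempty →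
        g' (A ∪ B) + g' (A ∩ B) ≤ g' A + g' B := by
      intro A B hne
      have := hsub A B hne
      by_cases hA : i₀ ∈ A <;> by_cases hB : i₀ ∈ B <;>
        simp [hg', mem_union, mem_inter, hA, hB] <;> omega
    have hpart' : ∀ Pp : Finset (Finset (Fin ℓ)), (∀ Z ∈ Pp, Z.Nonempty) →
        ((Pp : Set (Finset (Fin ℓ))).PairwiseDisjoint id) →
        (∀ i : Fin ℓ, ∃ Z ∈ Pp, i ∈ Z) → (m : ℤ) ≤ ∑ Z ∈ Pp, g' Z := by
      intro Pp h1 h2 h3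
      obtain ⟨Z₀, hZ₀mem, hiZ₀⟩ := h3 i₀
      have hind : ∑ W ∈ Pp, (if i₀ ∈ W then (1:ℤ) else 0) = 1 := by
        rw [Finset.sum_eq_single_of_mem Z₀ hZ₀mem]
        · simp [hiZ₀]
        · intro W hW hne
          have hd : Disjoint W Z₀ := h2 hW hZ₀mem hne
          have : i₀ ∉ W := fun h => Finset.disjoint_left.1 hd h hiZ₀
          simp [this]
      have := hpart Pp h1 h2 h3
      have hsplit : ∑ W ∈ Pp, g' W
          = ∑ W ∈ Pp, g W - ∑ W ∈ Pp, (if i₀ ∈ W then (1:ℤ) else 0) :=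
        Finset.sum_sub_distrib g (fun W => if i₀ ∈ W then (1:ℤ) else 0)
      rw [hsplit, hind]
      push_cast at this ⊢
      omega
    obtain ⟨δ', hsum', hcons'⟩ := ih g' hpos' hsub' hpart'
    refine ⟨fun i => δ' i + if i = i₀ then 1 else 0, ?_, ?_⟩
    · rw [Finset.sum_add_distrib, hsum', Finset.sum_ite_eq' univ i₀ (fun _ => 1)]
      simp
    · intro Ω hΩ
      have h1 := hcons' Ω hΩ
      have h2 : ∑ i ∈ Ω, ((δ' i + if i = i₀ then 1 else 0 : ℕ) : ℤ)
          = ∑ i ∈ Ω, (δ' i : ℤ) + (if i₀ ∈ Ω then 1 else 0) := by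
        push_cast
        rw [Finset.sum_add_distrib, Finset.sum_ite_eq' Ω i₀ (fun _ => (1:ℤ))]
      rw [h2]
      simp only [hg'] at h1
      by_cases h : i₀ ∈ Ω <;> simp [h] at h1 ⊢ <;> omega

/-- Characterization of generic kernel patterns of order at most `ℓ`:
let `n ≥ k ≥ d ≥ 0` and `V_1, …, V_ℓ` be subspaces of `F_q^n` of dimension at most `k`.
The following are equivalent:
(a) there exist integers `δ_1, …, δ_ℓ ≥ 0` with `∑ δ_i = k - d` and
    `dim (⋂_{i ∈ Ω} V_i) ≤ k - ∑_{i ∈ Ω} δ_i` for every nonempty `Ω ⊆ [ℓ]`;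
(b) for every partition `P_1 ⊔ ⋯ ⊔ P_s = [ℓ]`,
    `∑_{i} dim (⋂_{j ∈ P_i} V_j) ≤ (s - 1) k + d`. -/
theorem gkp_order_le_ell_char {Fq : Type*} [Field Fq] {n k d ℓ : ℕ}
    (hdk : d ≤ k) (hkn : k ≤ n)
    (V : Fin ℓ → Submodule Fq (Fin n → Fq))
    (hV : ∀ i, Module.finrank Fq ↥(V i) ≤ k) :
    (∃ δ : Fin ℓ → ℕ, ∑ i, δ i = k - d ∧
      ∀ Ω : Finset (Fin ℓ), Ω.Nonempty →
        (Module.finrank Fq ↥(⨅ i ∈ Ω, V i) : ℤ) ≤ (k : ℤ) - ∑ i ∈ Ω, (δ i : ℤ)) ↔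
    (∀ (s : ℕ) (P : Fin s → Finset (Fin ℓ)),
      (∀ i, (P i).Nonempty) → Pairwise (Function.onFun Disjoint P) →
      (∀ j, ∃ i, j ∈ P i) →
      ∑ i, (Module.finrank Fq ↥(⨅ j ∈ P i, V j) : ℤ) ≤ ((s : ℤ) - 1) * k + d) := by
  classical
  constructor
  · -- (a) → (b)
    rintro ⟨δ, hδsum, hδ⟩ s P h1 h2 h3
    have hbiUnion : Finset.univ.biUnion P = (Finset.univ : Finset (Fin ℓ)) := by
      ext j; simpa using h3 j
    have hdisj : (↑(Finset.univ : Finset (Fin s)) : Set (Fin s)).PairwiseDisjoint P :=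
      fun i _ j _ hij => h2 hij
    have hsum : ∑ i : Fin s, ∑ j ∈ P i, (δ j : ℤ) = (k : ℤ) - d := by
      rw [← Finset.sum_biUnion hdisj, hbiUnion, ← Nat.cast_sum]
      rw [hδsum, Nat.cast_sub hdk]
    calc ∑ i, (Module.finrank Fq ↥(⨅ j ∈ P i, V j) : ℤ)
        ≤ ∑ i : Fin s, ((k : ℤ) - ∑ j ∈ P i, (δ j : ℤ)) :=
          Finset.sum_le_sum fun i _ => hδ (P i) (h1 i)
      _ = (s : ℤ) * k - ∑ i : Fin s, ∑ j ∈ P i, (δ j : ℤ) := by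
          rw [Finset.sum_sub_distrib, Finset.sum_const]
          simp [mul_comm]
      _ = ((s : ℤ) - 1) * k + d := by rw [hsum]; ring
  · -- (b) → (a)
    intro hb
    set g : Finset (Fin ℓ) → ℤ :=
      fun Ω => (k : ℤ) - Module.finrank Fq ↥(⨅ i ∈ Ω, V i) with hg
    have hWinf : ∀ Ω : Finset (Fin ℓ), (⨅ i ∈ Ω, V i) = Ω.inf V :=
      fun Ω => (Finset.inf_eq_iInf Ω V).symm
    have hpos : ∀ Ω : Finset (Fin ℓ), Ω.Nonempty → 0 ≤ g Ω := by
      rintro Ω ⟨i, hi⟩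
      have hle : (⨅ j ∈ Ω, V j) ≤ V i := by
        rw [hWinf]; exact Finset.inf_le hi
      have := (Submodule.finrank_mono hle).trans (hV i)
      simp only [hg]
      omega
    have hsub : ∀ A B : Finset (Fin ℓ), (A ∩ B).Nonempty →
        g (A ∪ B) + g (A ∩ B) ≤ g A + g B := by
      intro A B _
      have hunion : (⨅ i ∈ A ∪ B, V i) = (⨅ i ∈ A, V i) ⊓ (⨅ i ∈ B, V i) := by
        rw [hWinf, hWinf, hWinf, Finset.inf_union]
      have hsup : (⨅ i ∈ A, V i) ⊔ (⨅ i ∈ B, V i) ≤ ⨅ i ∈ A ∩ B, V i := by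
        rw [hWinf, hWinf, hWinf]
        exact sup_le (Finset.inf_mono Finset.inter_subset_left)
          (Finset.inf_mono Finset.inter_subset_right)
      have heq := Submodule.finrank_sup_add_finrank_inf_eq
        (⨅ i ∈ A, V i) (⨅ i ∈ B, V i)
      have hle := Submodule.finrank_mono (R := Fq) hsup
      simp only [hg]
      rw [hunion]
      push_cast
      omega
    have hpart : ∀ Pp : Finset (Finset (Fin ℓ)), (∀ Z ∈ Pp, Z.Nonempty) →
        ((Pp : Set (Finset (Fin ℓ))).PairwiseDisjoint id) →
        (∀ i : Fin ℓ, ∃ Z ∈ Pp, i ∈ Z) → ((k - d : ℕ) : ℤ) ≤ ∑ Z ∈ Pp, g Z := by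
      intro Pp h1 h2 h3
      set s := Pp.card with hs
      set e := Pp.equivFin with he
      set P : Fin s → Finset (Fin ℓ) := fun t => (e.symm t : Finset (Fin ℓ)) with hP
      have hPmem : ∀ t, P t ∈ Pp := fun t => (e.symm t).2
      have hb' := hb s P (fun t => h1 _ (hPmem t))
        (by
          intro t t' htt'
          refine h2 (hPmem t) (hPmem t') fun hcontra => htt' ?_
          have : e.symm t = e.symm t' := Subtype.ext hcontra
          exact e.symm.injective.eq_iff.1 this ▸ rfl)
        (by
          intro j
          obtain ⟨Z, hZ, hjZ⟩ := h3 j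
          exact ⟨e ⟨Z, hZ⟩, by simpa [hP] using hjZ⟩)
      have hsum_eq : ∑ t : Fin s, g (P t) = ∑ Z ∈ Pp, g Z := by
        rw [← Finset.sum_coe_sort Pp g]
        exact Fintype.sum_equiv e.symm _ _ fun t => rfl
      have hexp : ∑ t : Fin s, g (P t)
          = (s : ℤ) * k - ∑ t : Fin s, (Module.finrank Fq ↥(⨅ j ∈ P t, V j) : ℤ) := by
        simp only [hg]
        rw [Finset.sum_sub_distrib, Finset.sum_const]
        simp [mul_comm]
      rw [← hsum_eq, hexp, Nat.cast_sub hdk]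
      have : ((s : ℤ) - 1) * k + d = (s : ℤ) * k - (k - d) := by ring
      omega
    obtain ⟨δ, hδsum, hδ⟩ := gkp_dilworth_aux (k - d) g hpos hsub hpart
    exact ⟨δ, hδsum, fun Ω hΩ => by have := hδ Ω hΩ; simp only [hg] at this; omega⟩
end

section
/- Let F be an extension field of F_q, G ∈ F^{k×n}, and for i ∈ [ℓ] let V_i ⊆ F_q^n be a subspace with V_i = column span of A_i ∈ F_q^{n×dim V_i}. Let G_{V_i} ⊆ F^k denote the F-column span of G·A_i. Then dim_F(⋂_{i∈[ℓ]} G_{V_i}) = ∑_{i∈[ℓ]} dim_F G_{V_i} - rank(M), where M is the block matrix with ℓ-1 block rows, whose i-th block row is (GA_1, 0, ..., 0, GA_{i+1}, 0, ..., 0) — i.e., the block matrix whose rows are [GA_1 | GA_2 | 0 | ... ], [GA_1 | 0 | GA_3 | ...], ..., [GA_1 | 0 | ... | GA_ℓ]. -/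
open Matrix LinearMap Module

set_option maxHeartbeats 1000000 in
set_option synthInstance.maxHeartbeats 1000000 in
theorem aux_dim {F : Type*} [Field F] {k ℓ : ℕ} (hℓ : 1 ≤ ℓ) (d : Fin ℓ → ℕ)
    (B : (i : Fin ℓ) → Matrix (Fin k) (Fin (d i)) F) :
    (Module.finrank F ↥(⨅ i, LinearMap.range (B i).mulVecLin) : ℤ) =
      ∑ i, (Module.finrank F ↥(LinearMap.range (B i).mulVecLin) : ℤ) -
        (Matrix.rank (Matrix.of
          fun (p : Fin (ℓ - 1) × Fin k) (c : (j : Fin ℓ) × Fin (d j)) =>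
            if (c.1 : ℕ) = 0 ∨ (c.1 : ℕ) = (p.1 : ℕ) + 1
            then (B c.1) p.2 c.2 else 0) : ℤ) := by
  set e0 : Fin ℓ := ⟨0, hℓ⟩ with he0
  set e : Fin (ℓ - 1) → Fin ℓ := fun p => ⟨p.1 + 1, by have := p.2; omega⟩ with he
  set M : Matrix (Fin (ℓ - 1) × Fin k) ((j : Fin ℓ) × Fin (d j)) F :=
    Matrix.of (fun (p : Fin (ℓ - 1) × Fin k) (c : (j : Fin ℓ) × Fin (d j)) =>
      if (c.1 : ℕ) = 0 ∨ (c.1 : ℕ) = (p.1 : ℕ) + 1 then (B c.1) p.2 c.2 else 0) with hM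
  have hne : ∀ p : Fin (ℓ - 1), e0 ≠ e p := by
    intro p
    simp [he0, he, Fin.ext_iff]
  have key : ∀ (x : ((j : Fin ℓ) × Fin (d j)) → F) (p : Fin (ℓ - 1)) (r : Fin k),
      M.mulVecLin x (p, r) =
        (B e0).mulVec (fun c => x ⟨e0, c⟩) r + (B (e p)).mulVec (fun c => x ⟨e p, c⟩) r := by
    intro x p r
    simp only [mulVecLin_apply, mulVec, dotProduct, hM, Matrix.of_apply]
    rw [← Finset.univ_sigma_univ, Finset.sum_sigma]
    have step : ∀ j : Fin ℓ,
        (∑ c2 : Fin (d j), (if (j : ℕ) = 0 ∨ (j : ℕ) = (p : ℕ) + 1 then B j r c2 else 0)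
          * x ⟨j, c2⟩)
        = (if j = e0 then ∑ c2 : Fin (d j), B j r c2 * x ⟨j, c2⟩ else 0)
          + (if j = e p then ∑ c2 : Fin (d j), B j r c2 * x ⟨j, c2⟩ else 0) := by
      intro j
      by_cases h0 : j = e0
      · have h1 : j ≠ e p := by rw [h0]; exact hne p
        have hcond : (j : ℕ) = 0 ∨ (j : ℕ) = (p : ℕ) + 1 := Or.inl (by simp [h0, he0])
        simp only [if_pos hcond]
        simp [h0, h1, hcond, hne p]
      · by_cases h1 : j = e p
        · have hcond : (j : ℕ) = 0 ∨ (j : ℕ) = (p : ℕ) + 1 := Or.inr (by simp [h1, he])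
          subst h1
          simp only [if_pos hcond]
          simp [hcond, Ne.symm (hne p)]
        · have hcond : ¬((j : ℕ) = 0 ∨ (j : ℕ) = (p : ℕ) + 1) := by
            push_neg
            constructor
            · intro hc; exact h0 (Fin.ext (by simp [he0, hc]))
            · intro hc; exact h1 (Fin.ext (by simp [he, hc]))
          simp [h0, h1, hcond]
    rw [Finset.sum_congr rfl (fun j _ => step j), Finset.sum_add_distrib,
      Finset.sum_ite_eq' Finset.univ e0, Finset.sum_ite_eq' Finset.univ (e p)]
    simp
  -- the map ψ : ker M.mulVecLin → F^k, x ↦ (B e0).mulVec x_{e0}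
  set ψ : ↥(LinearMap.ker M.mulVecLin) →ₗ[F] (Fin k → F) :=
    ((B e0).mulVecLin.comp (LinearMap.funLeft F F (fun c => ⟨e0, c⟩ : Fin (d e0) → (j : Fin ℓ) × Fin (d j)))).comp
      (LinearMap.ker M.mulVecLin).subtype with hψ
  have ψ_apply : ∀ x : ↥(LinearMap.ker M.mulVecLin),
      ψ x = (B e0).mulVec (fun c => x.1 ⟨e0, c⟩) := fun x => rfl
  -- every index is e0 or (e p)
  have hsurj : ∀ j : Fin ℓ, j ≠ e0 → ∃ p : Fin (ℓ - 1), e p = j := by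
    intro j hj
    have hj' : (j : ℕ) ≠ 0 := fun hc => hj (Fin.ext (by simp [he0, hc]))
    refine ⟨⟨(j : ℕ) - 1, by have := j.2; omega⟩, Fin.ext ?_⟩
    simp [he]; omega
  -- for x in the kernel, each block is forced
  have hker : ∀ x : ((j : Fin ℓ) × Fin (d j)) → F, x ∈ LinearMap.ker M.mulVecLin →
      ∀ p : Fin (ℓ - 1),
        (B (e p)).mulVec (fun c => x ⟨e p, c⟩) = -(B e0).mulVec (fun c => x ⟨e0, c⟩) := by
    intro x hx p
    funext r
    have h0 : M.mulVecLin x (p, r) = 0 := by rw [LinearMap.mem_ker.mp hx]; rfl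
    rw [key x p r] at h0
    simp only [Pi.neg_apply]
    exact eq_neg_of_add_eq_zero_right h0
  -- Claim A : range ψ = ⨅ i, range (B i).mulVecLin
  have hrange : LinearMap.range ψ = ⨅ i, LinearMap.range (B i).mulVecLin := by
    apply le_antisymm
    · rintro y ⟨x, rfl⟩
      rw [Submodule.mem_iInf]
      intro i
      by_cases hi : i = e0
      · rw [hi]
        exact ⟨fun c => x.1 ⟨e0, c⟩, rfl⟩
      · obtain ⟨p, hp⟩ := hsurj i hi
        refine ⟨-(fun c => x.1 ⟨i, c⟩), ?_⟩
        have := hker x.1 x.2 p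
        rw [ψ_apply]
        subst hp
        rw [mulVecLin_apply, Matrix.mulVec_neg, this, neg_neg]
    · intro y hy
      rw [Submodule.mem_iInf] at hy
      choose v hv using fun i => hy i
      set x : ((j : Fin ℓ) × Fin (d j)) → F :=
        fun c => if c.1 = e0 then v c.1 c.2 else -v c.1 c.2 with hx
      have hx0 : (fun c => x ⟨e0, c⟩) = v e0 := by funext c; simp [hx]
      have hxp : ∀ p : Fin (ℓ - 1), (fun c => x ⟨e p, c⟩) = -v (e p) := by
        intro p; funext c; simp [hx, Ne.symm (hne p)]
      have hxker : x ∈ LinearMap.ker M.mulVecLin := by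
        rw [LinearMap.mem_ker]
        funext pr
        obtain ⟨p, r⟩ := pr
        rw [key x p r, hx0, hxp p, Matrix.mulVec_neg]
        have h1 : (B e0).mulVec (v e0) r = y r := by rw [← mulVecLin_apply, hv e0]
        have h2 : (B (e p)).mulVec (v (e p)) r = y r := by rw [← mulVecLin_apply, hv (e p)]
        simp only [Pi.zero_apply, Pi.neg_apply, h1, h2]
        ring
      refine ⟨⟨x, hxker⟩, ?_⟩
      rw [ψ_apply, hx0, ← mulVecLin_apply, hv e0]
  -- Claim B : ker ψ ≃ₗ Π j, ker (B j).mulVecLin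
  have hkerblocks : ∀ x : ↥(LinearMap.ker M.mulVecLin), x ∈ LinearMap.ker ψ →
      ∀ j : Fin ℓ, (B j).mulVec (fun c => x.1 ⟨j, c⟩) = 0 := by
    intro x hx j
    have h0 : (B e0).mulVec (fun c => x.1 ⟨e0, c⟩) = 0 := by
      rw [← ψ_apply]; exact hx
    by_cases hj : j = e0
    · subst hj; exact h0
    · obtain ⟨p, hp⟩ := hsurj j hj
      subst hp
      rw [hker x.1 x.2 p, h0, neg_zero]
  have equivK : ↥(LinearMap.ker ψ) ≃ₗ[F] ((j : Fin ℓ) → ↥(LinearMap.ker (B j).mulVecLin)) :=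
    { toFun := fun x j => ⟨fun c => x.1.1 ⟨j, c⟩, by
        rw [LinearMap.mem_ker, mulVecLin_apply]
        exact hkerblocks x.1 x.2 j⟩
      map_add' := fun x y => by ext j c; rfl
      map_smul' := fun a x => by ext j c; rfl
      invFun := fun y => ⟨⟨fun c => (y c.1).1 c.2, by
        rw [LinearMap.mem_ker]
        funext pr
        obtain ⟨p, r⟩ := pr
        rw [key _ p r]
        have h1 : (B e0).mulVec (fun c => (y e0).1 c) = 0 := LinearMap.mem_ker.mp (y e0).2
        have h2 : (B (e p)).mulVec (fun c => (y (e p)).1 c) = 0 :=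
          LinearMap.mem_ker.mp (y (e p)).2
        simp only [Pi.zero_apply]
        calc (B e0).mulVec (fun c => (y e0).1 c) r + (B (e p)).mulVec (fun c => (y (e p)).1 c) r
            = 0 + 0 := by rw [h1, h2]; rfl
          _ = 0 := by ring⟩, by
        rw [LinearMap.mem_ker, ψ_apply]
        exact LinearMap.mem_ker.mp (y e0).2⟩
      left_inv := fun x => by
        apply Subtype.ext; apply Subtype.ext
        funext c
        obtain ⟨j, c2⟩ := c
        rfl
      right_inv := fun y => by
        funext j
        apply Subtype.ext
        rfl }
  -- dimension counting
  have hD : finrank F (((j : Fin ℓ) × Fin (d j)) → F) = ∑ j, d j := by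
    rw [Module.finrank_fintype_fun_eq_card, Fintype.card_sigma]
    simp
  have h1 : finrank F ↥(LinearMap.range M.mulVecLin)
      + finrank F ↥(LinearMap.ker M.mulVecLin) = ∑ j, d j := by
    rw [LinearMap.finrank_range_add_finrank_ker, hD]
  have h2 : finrank F ↥(LinearMap.range ψ) + finrank F ↥(LinearMap.ker ψ)
      = finrank F ↥(LinearMap.ker M.mulVecLin) :=
    LinearMap.finrank_range_add_finrank_ker ψ
  have h4 : finrank F ↥(LinearMap.ker ψ)
      = ∑ j, finrank F ↥(LinearMap.ker (B j).mulVecLin) := by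
    rw [equivK.finrank_eq, Module.finrank_pi_fintype]
  have h5 : ∀ j, finrank F ↥(LinearMap.range (B j).mulVecLin)
      + finrank F ↥(LinearMap.ker (B j).mulVecLin) = d j := by
    intro j
    rw [LinearMap.finrank_range_add_finrank_ker, Module.finrank_fintype_fun_eq_card,
      Fintype.card_fin]
  have h5' : (∑ j, finrank F ↥(LinearMap.range (B j).mulVecLin))
      + (∑ j, finrank F ↥(LinearMap.ker (B j).mulVecLin)) = ∑ j, d j := by
    rw [← Finset.sum_add_distrib]
    exact Finset.sum_congr rfl (fun j _ => h5 j)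
  have hMrank : M.rank = finrank F ↥(LinearMap.range M.mulVecLin) := rfl
  rw [← hrange, ← Nat.cast_sum]
  omega

/-- Let `F/F_q` be a field extension, `G ∈ F^{k×n}`, and for `i ∈ [ℓ]` let `A_i` be a
full-column-rank matrix over `F_q` with `n` rows and `d_i` columns (whose column span is
`V_i`), and let `G_{V_i} ⊆ F^k` be the `F`-column span of `G·A_i`.  Then
`dim_F (⋂ᵢ G_{V_i}) = ∑ᵢ dim_F G_{V_i} - rank M`, where `M` is the block matrix with
`ℓ - 1` block rows whose `i`-th block row is `[G A_1 | 0 | ⋯ | G A_{i+1} | ⋯ | 0]`,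
i.e. whose `(i, j)`-th block is `G A_j` if `j = 1` or `j = i + 1` and `0` otherwise. -/
theorem dim_inter_eq_sum_dim_sub_rank_block {Fq F : Type*} [Field Fq] [Field F]
    [Algebra Fq F] {k n ℓ : ℕ} (hℓ : 1 ≤ ℓ) (d : Fin ℓ → ℕ)
    (G : Matrix (Fin k) (Fin n) F)
    (A : (i : Fin ℓ) → Matrix (Fin n) (Fin (d i)) Fq)
    (hA : ∀ i, (A i).rank = d i) :
    (Module.finrank F
        ↥(⨅ i, LinearMap.range (G * (A i).map (algebraMap Fq F)).mulVecLin) : ℤ) =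
      ∑ i, (Module.finrank F
          ↥(LinearMap.range (G * (A i).map (algebraMap Fq F)).mulVecLin) : ℤ) -
        (Matrix.rank (Matrix.of
          fun (p : Fin (ℓ - 1) × Fin k) (c : (j : Fin ℓ) × Fin (d j)) =>
            if (c.1 : ℕ) = 0 ∨ (c.1 : ℕ) = (p.1 : ℕ) + 1
            then (G * (A c.1).map (algebraMap Fq F)) p.2 c.2 else 0) : ℤ) :=
  aux_dim hℓ d (fun i => G * (A i).map (algebraMap Fq F))
end

section
/- Let 1 ≤ k ≤ n and let α_1, ..., α_n be elements of an extension field F of F_q that are linearly independent over F_q. Then the Gabidulin code G_{n,k}(α_1,...,α_n) = {(f(α_1),...,f(α_n)) : f(X) = ∑_{i=1}^k c_i X^{q^{i-1}}, c_i ∈ F} is an MRD code: it is a k-dimensional F-subspace of F^n, and every nonzero codeword v satisfies rank_{F_q}(v) ≥ n - k + 1. -/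
open Polynomial

section Aux

variable (Fq : Type*) [Field Fq] [Fintype Fq] {F : Type*} [Field F] [Algebra Fq F]

lemma gab_pow_add (x y : F) (i : ℕ) :
    (x + y) ^ Fintype.card Fq ^ i = x ^ Fintype.card Fq ^ i + y ^ Fintype.card Fq ^ i := by
  set p := ringChar Fq with hpdef
  haveI : CharP Fq p := ringChar.charP Fq
  have hp : p.Prime := CharP.char_is_prime Fq p
  haveI : Fact p.Prime := ⟨hp⟩
  haveI : CharP F p := charP_of_injective_algebraMap
    (algebraMap Fq F).injective p
  haveI : ExpChar F p := .prime hp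
  obtain ⟨m, -, hq⟩ := FiniteField.card Fq p
  simp only [hq, ← pow_mul]
  exact add_pow_char_pow ..

lemma gab_pow_smul (a : Fq) (x : F) (i : ℕ) :
    (a • x) ^ Fintype.card Fq ^ i = a • x ^ Fintype.card Fq ^ i := by
  rw [Algebra.smul_def, Algebra.smul_def, mul_pow, ← map_pow,
    FiniteField.pow_card_pow]

/-- The `q`-linearized map `x ↦ ∑ i, c i * x ^ (q ^ i)`, as an `F_q`-linear map. -/
noncomputable def qlinMap {k : ℕ} (c : Fin k → F) : F →ₗ[Fq] F where
  toFun x := ∑ i : Fin k, c i * x ^ (Fintype.card Fq ^ (i : ℕ))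
  map_add' x y := by
    simp only [gab_pow_add Fq, mul_add, Finset.sum_add_distrib]
  map_smul' a x := by
    simp only [gab_pow_smul Fq, RingHom.id_apply, Finset.smul_sum, mul_smul_comm]

lemma qlinMap_ker_finite_and_finrank {k : ℕ} {c : Fin k → F} (hc : c ≠ 0) :
    (LinearMap.ker (qlinMap Fq c) : Set F).Finite ∧
      Module.finrank Fq (LinearMap.ker (qlinMap Fq c)) ≤ k - 1 := by
  classical
  have hq1 : 1 < Fintype.card Fq := Fintype.one_lt_card
  set q := Fintype.card Fq with hqdef
  set P : F[X] := ∑ i : Fin k, C (c i) * X ^ (q ^ (i : ℕ)) with hP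
  have hPeval : ∀ x : F, P.eval x = qlinMap Fq c x := by
    intro x
    simp [hP, qlinMap, eval_finset_sum]
    rfl
  -- P ≠ 0
  obtain ⟨i0, hi0⟩ : ∃ i, c i ≠ 0 := Function.ne_iff.mp hc
  have hcoeff : P.coeff (q ^ (i0 : ℕ)) = c i0 := by
    rw [hP, finset_sum_coeff]
    rw [Finset.sum_eq_single i0]
    · simp
    · intro b _ hb
      have : q ^ (i0 : ℕ) ≠ q ^ (b : ℕ) := by
        intro h
        exact hb (Fin.val_injective (Nat.pow_right_injective hq1 h.symm))
      simp [coeff_C_mul, coeff_X_pow, this]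
    · simp
  have hP0 : P ≠ 0 := fun h => hi0 (by simpa [h] using hcoeff.symm)
  -- degree bound
  have hdeg : P.natDegree ≤ q ^ (k - 1) := by
    apply natDegree_sum_le_of_forall_le
    intro i _
    refine (natDegree_C_mul_X_pow_le _ _).trans ?_
    exact Nat.pow_le_pow_right (by omega) (by omega)
  -- kernel is contained in the root set
  have hsub : (LinearMap.ker (qlinMap Fq c) : Set F) ⊆ {x | P.IsRoot x} := by
    intro x hx
    simp only [SetLike.mem_coe, LinearMap.mem_ker] at hx
    simp [Set.mem_setOf_eq, IsRoot, hPeval, hx]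
  have hrootfin : ({x : F | P.IsRoot x}).Finite := finite_setOf_isRoot hP0
  have hfin : (LinearMap.ker (qlinMap Fq c) : Set F).Finite := hrootfin.subset hsub
  refine ⟨hfin, ?_⟩
  haveI : Finite (LinearMap.ker (qlinMap Fq c)) := hfin
  haveI : Fintype (LinearMap.ker (qlinMap Fq c)) := Fintype.ofFinite _
  -- card bound
  have hroots_eq : {x : F | P.IsRoot x} = (P.roots.toFinset : Set F) := by
    ext x
    simp [Multiset.mem_toFinset, mem_roots, hP0]
  have hcard1 : Fintype.card (LinearMap.ker (qlinMap Fq c)) ≤ q ^ (k - 1) := by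
    have h1 : (LinearMap.ker (qlinMap Fq c) : Set F).ncard ≤
        ({x : F | P.IsRoot x}).ncard := Set.ncard_le_ncard hsub hrootfin
    have h2 : ({x : F | P.IsRoot x}).ncard ≤ q ^ (k - 1) := by
      rw [hroots_eq, Set.ncard_coe_finset]
      exact (Multiset.toFinset_card_le _).trans ((card_roots' P).trans hdeg)
    have h3 : (LinearMap.ker (qlinMap Fq c) : Set F).ncard =
        Fintype.card (LinearMap.ker (qlinMap Fq c)) := by
      rw [Set.ncard_eq_toFinset_card', Set.toFinset_card]
      rfl
    omega
  have hcard2 : Fintype.card (LinearMap.ker (qlinMap Fq c)) =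
      q ^ Module.finrank Fq (LinearMap.ker (qlinMap Fq c)) := Module.card_eq_pow_finrank
  rw [hcard2] at hcard1
  exact (Nat.pow_le_pow_iff_right hq1).mp hcard1

end Aux

/-- The Gabidulin code `G_{n,k}(α_1, …, α_n)`: the `F`-row space of the Moore matrix
`(α_j^{q^{i-1}})_{i ∈ [k], j ∈ [n]}`, i.e. all evaluation vectors
`(f(α_1), …, f(α_n))` of `q`-linearized polynomials `f(X) = ∑_{i=1}^k c_i X^{q^{i-1}}`
with coefficients `c_i ∈ F`. -/
noncomputable def gabidulin (Fq : Type*) [Field Fq] [Fintype Fq] {F : Type*} [Field F]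
    [Algebra Fq F] {n : ℕ} (k : ℕ) (α : Fin n → F) : Submodule F (Fin n → F) :=
  LinearMap.range (Matrix.vecMulLinear
    (Matrix.of fun (i : Fin k) (j : Fin n) => α j ^ (Fintype.card Fq ^ (i : ℕ))))

/-- Gabidulin codes are MRD: for `1 ≤ k ≤ n` and `α_1, …, α_n` in an extension field `F`
of `F_q` that are linearly independent over `F_q`, the Gabidulin code
`G_{n,k}(α_1, …, α_n)` is a `k`-dimensional `F`-subspace of `F^n` and every nonzero
codeword `v` satisfies `rank_{F_q}(v) ≥ n - k + 1`. -/
theorem gabidulin_is_mrd {Fq F : Type*} [Field Fq] [Fintype Fq] [Field F] [Algebra Fq F]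
    {n k : ℕ} (hk : 1 ≤ k) (hkn : k ≤ n) (α : Fin n → F)
    (hα : LinearIndependent Fq α) :
    Module.finrank F ↥(gabidulin Fq k α) = k ∧
    ∀ v ∈ gabidulin Fq k α, v ≠ 0 →
      n - k + 1 ≤ Module.finrank Fq ↥(Submodule.span Fq (Set.range v)) := by
  set M : Matrix (Fin k) (Fin n) F :=
    Matrix.of fun (i : Fin k) (j : Fin n) => α j ^ (Fintype.card Fq ^ (i : ℕ)) with hM
  set U : Submodule Fq F := Submodule.span Fq (Set.range α) with hU
  haveI : FiniteDimensional Fq U := FiniteDimensional.span_of_finite Fq (Set.finite_range α)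
  have hUrank : Module.finrank Fq U = n := by
    rw [hU, finrank_span_eq_card hα, Fintype.card_fin]
  -- evaluation formula
  have heval : ∀ (c : Fin k → F) (j : Fin n),
      M.vecMulLinear c j = qlinMap Fq c (α j) := by
    intro c j
    simp [Matrix.vecMulLinear_apply, Matrix.vecMul, dotProduct, hM, qlinMap]
  -- a nonzero coefficient vector gives a kernel of finrank ≤ k-1
  have hinj : Function.Injective M.vecMulLinear := by
    rw [← LinearMap.ker_eq_bot, LinearMap.ker_eq_bot']
    intro c hc0
    by_contra hc
    obtain ⟨hfin, hrk⟩ := qlinMap_ker_finite_and_finrank Fq (c := c) hc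
    haveI : Finite (LinearMap.ker (qlinMap Fq c)) := hfin
    have hUle : U ≤ LinearMap.ker (qlinMap Fq c) := by
      rw [hU, Submodule.span_le]
      rintro x ⟨j, rfl⟩
      have := heval c j
      rw [hc0] at this
      simp only [Pi.zero_apply] at this
      simpa [LinearMap.mem_ker] using this.symm
    have := Submodule.finrank_mono hUle
    rw [hUrank] at this
    omega
  constructor
  · rw [gabidulin, LinearMap.finrank_range_of_inj hinj]
    simp
  · rintro v hv hv0
    obtain ⟨c, rfl⟩ := hv
    have hc : c ≠ 0 := by
      rintro rfl
      exact hv0 (map_zero _)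
    obtain ⟨hfin, hrk⟩ := qlinMap_ker_finite_and_finrank Fq (c := c) hc
    haveI : Finite (LinearMap.ker (qlinMap Fq c)) := hfin
    -- the span of the codeword's coordinates is the image of U
    have hrange : Set.range (M.vecMulLinear c) = (qlinMap Fq c) '' (Set.range α) := by
      ext x
      constructor
      · rintro ⟨j, rfl⟩
        exact ⟨α j, ⟨j, rfl⟩, (heval c j).symm⟩
      · rintro ⟨y, ⟨j, rfl⟩, rfl⟩
        exact ⟨j, heval c j⟩
    have hspan : Submodule.span Fq (Set.range (M.vecMulLinear c)) =
        Submodule.map (qlinMap Fq c) U := by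
      rw [hrange, hU, Submodule.map_span]
    -- rank-nullity for the restriction of qlinMap to U
    set g := (qlinMap Fq c).domRestrict U with hg
    have hrg : LinearMap.range g = Submodule.map (qlinMap Fq c) U :=
      LinearMap.range_domRestrict U (qlinMap Fq c)
    have hrn : Module.finrank Fq (LinearMap.range g) +
        Module.finrank Fq (LinearMap.ker g) = n := by
      rw [LinearMap.finrank_range_add_finrank_ker g, hUrank]
    -- kernel of g embeds into kernel of qlinMap
    have hkerle : Module.finrank Fq (LinearMap.ker g) ≤
        Module.finrank Fq (LinearMap.ker (qlinMap Fq c)) := by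
      have hemb : ∀ x : LinearMap.ker g, (x : U).1 ∈ LinearMap.ker (qlinMap Fq c) := by
        rintro ⟨⟨x, hxU⟩, hx⟩
        simpa [LinearMap.mem_ker, hg, LinearMap.domRestrict_apply] using hx
      let e : LinearMap.ker g →ₗ[Fq] LinearMap.ker (qlinMap Fq c) :=
        { toFun := fun x => ⟨(x : U).1, hemb x⟩
          map_add' := fun x y => rfl
          map_smul' := fun a x => rfl }
      have he2 : Function.Injective e := by
        intro x y h
        have hxy := congrArg Subtype.val h
        exact Subtype.ext (Subtype.ext hxy)
      exact LinearMap.finrank_le_finrank_of_injective he2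
    have hfr : Module.finrank Fq ↥(Submodule.span Fq (Set.range (M.vecMulLinear c))) =
        Module.finrank Fq (LinearMap.range g) := by
      rw [hspan, hrg]
    rw [hfr]
    omega
end
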